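/- arXiv:1312.2056 — 9 statements merged into one kernel-verified Lean document; each statement's English description precedes it below -/
import Mathlib

section
/- Let X be a compact metric space with probability measure μ, and let d be the metric on M(X) defined by d(μ,ν) = Σₙ |∫fₙ dμ − ∫fₙ dν| / (2ⁿ(‖fₙ‖+1)) for a dense sequence {fₙ} in C(X,ℝ). If A, B are Borel subsets of X with μ(A) > 0, μ(B) > 0, and μ(A △ B) < μ(A)·ε, then d(μ_A, μ_B) ≤ 2ε. -/
open MeasureTheory Topology Set Function TopologicalSpace

noncomputable section

namespace Paper

/-- The orbit closure of a point. -/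
def orbitClosure {α : Type*} [TopologicalSpace α] (T : α → α) (x : α) : Set α :=
  closure (Set.range fun n : ℕ => T^[n] x)

/-- Topological transitivity: `N(U,V)` is infinite for all non-empty open `U, V`. -/
def IsTransitive {α : Type*} [TopologicalSpace α] (T : α → α) : Prop :=
  ∀ U V : Set α, IsOpen U → U.Nonempty → IsOpen V → V.Nonempty →
    {n : ℕ | (U ∩ T^[n] ⁻¹' V).Nonempty}.Infinite

/-- Weak mixing: the product system is transitive. -/
def IsWeaklyMixing {α : Type*} [TopologicalSpace α] (T : α → α) : Prop :=
  IsTransitive (Prod.map T T)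

/-- Total transitivity. -/
def IsTotallyTransitive {α : Type*} [TopologicalSpace α] (T : α → α) : Prop :=
  ∀ n : ℕ, 0 < n → IsTransitive (T^[n])

/-- A minimal point: its orbit closure is a minimal subsystem. -/
def IsMinimalPoint {α : Type*} [TopologicalSpace α] (T : α → α) (x : α) : Prop :=
  ∀ Y : Set α, Y.Nonempty → IsClosed Y → MapsTo T Y Y → Y ⊆ orbitClosure T x →
    Y = orbitClosure T x

def IsPeriodicPoint {α : Type*} (T : α → α) (x : α) : Prop :=
  ∃ n : ℕ, 0 < n ∧ T^[n] x = x

def IsPeriodicSystem {α : Type*} (T : α → α) : Prop :=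
  ∃ m : ℕ, 0 < m ∧ T^[m] = id

def IsPointwisePeriodic {α : Type*} (T : α → α) : Prop :=
  ∀ x : α, IsPeriodicPoint T x

def IsMSystem {α : Type*} [TopologicalSpace α] (T : α → α) : Prop :=
  IsTransitive T ∧ Dense {x : α | IsMinimalPoint T x}

def IsPSystem {α : Type*} [TopologicalSpace α] (T : α → α) : Prop :=
  IsTransitive T ∧ Dense {x : α | IsPeriodicPoint T x}

/-- An E-system: transitive with an invariant (Borel) probability measure of full support. -/
def IsESystem {α : Type*} [TopologicalSpace α] (T : α → α) : Prop :=
  IsTransitive T ∧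
    let _i : MeasurableSpace α := borel α
    ∃ μ : Measure α, IsProbabilityMeasure μ ∧ μ.map T = μ ∧
      ∀ U : Set α, IsOpen U → U.Nonempty → 0 < μ U

/-- A proximal pair: the orbit closure of `(x, y)` meets the diagonal. -/
def IsProximalPair {α : Type*} [TopologicalSpace α] (T : α → α) (x y : α) : Prop :=
  ∃ z : α, (z, z) ∈ closure (Set.range fun n : ℕ => (T^[n] x, T^[n] y))

def IsDistalPoint {α : Type*} [TopologicalSpace α] (T : α → α) (x : α) : Prop :=
  ∀ y ∈ orbitClosure T x, IsProximalPair T x y → y = x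

def IsDistalSystem {α : Type*} [TopologicalSpace α] (T : α → α) : Prop :=
  ∀ x y : α, IsProximalPair T x y → x = y

/-- The induced map on the hyperspace of non-empty compact (= closed) subsets. -/
def TK {α : Type*} [TopologicalSpace α] (T : α → α) (hT : Continuous T)
    (C : NonemptyCompacts α) : NonemptyCompacts α :=
  ⟨⟨T '' (C : Set α), C.isCompact.image hT⟩, C.nonempty.image T⟩

/-- The induced map on the space of Borel probability measures. -/
def TM {α : Type*} [TopologicalSpace α] [MeasurableSpace α] [BorelSpace α] (T : α → α)
    (hT : Continuous T) (μ : ProbabilityMeasure α) : ProbabilityMeasure α :=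
  μ.map hT.measurable.aemeasurable

/-- Almost dense periodic sets. -/
def AlmostDensePeriodicSets {α : Type*} [TopologicalSpace α] (T : α → α) : Prop :=
  let _i : MeasurableSpace α := borel α
  ∀ U : Set α, IsOpen U → U.Nonempty → ∀ ε : ℝ, 0 < ε →
    ∃ k : ℕ, 0 < k ∧ ∃ μ : Measure α, IsProbabilityMeasure μ ∧ μ.map (T^[k]) = μ ∧
      μ Uᶜ < ENNReal.ofReal ε

def IsAlmostHYSystem {α : Type*} [TopologicalSpace α] (T : α → α) : Prop :=
  IsTotallyTransitive T ∧ AlmostDensePeriodicSets T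

def IsFactorMap {α β : Type*} [TopologicalSpace α] [TopologicalSpace β]
    (T : α → α) (S : β → β) (π : α → β) : Prop :=
  Continuous π ∧ Surjective π ∧ π ∘ T = S ∘ π

def IsJoining {α β : Type*} [TopologicalSpace α] [TopologicalSpace β]
    (T : α → α) (S : β → β) (J : Set (α × β)) : Prop :=
  J.Nonempty ∧ IsClosed J ∧ MapsTo (Prod.map T S) J J ∧
    Prod.fst '' J = Set.univ ∧ Prod.snd '' J = Set.univ

def AreDisjoint {α β : Type*} [TopologicalSpace α] [TopologicalSpace β]
    (T : α → α) (S : β → β) : Prop :=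
  ∀ J : Set (α × β), IsJoining T S J → J = Set.univ

def IsMinimalSystem {β : Type*} [TopologicalSpace β] (S : β → β) : Prop :=
  ∀ Y : Set β, Y.Nonempty → IsClosed Y → MapsTo S Y Y → Y = Set.univ

/-- Disjoint from every minimal system (on a compact metric space). -/
def DisjointFromAllMinimal {α : Type*} [TopologicalSpace α] (T : α → α) : Prop :=
  ∀ (β : Type) (_ : MetricSpace β) (_ : CompactSpace β) (S : β → β),
    Continuous S → Surjective S → IsMinimalSystem S → AreDisjoint T S

theorem conditional_measures_close {X : Type*} [MetricSpace X] [CompactSpace X]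
    [MeasurableSpace X] [BorelSpace X]
    (f : ℕ → C(X, ℝ)) (hf : DenseRange f)
    (d : Measure X → Measure X → ℝ)
    (hd : ∀ μ ν : Measure X, d μ ν =
      ∑' m : ℕ, |(∫ x, f m x ∂μ) - ∫ x, f m x ∂ν| / (2 ^ (m + 1) * (‖f m‖ + 1)))
    (μ : Measure X) [IsProbabilityMeasure μ]
    (A B : Set X) (hA : MeasurableSet A) (hB : MeasurableSet B)
    (hApos : 0 < μ A) (hBpos : 0 < μ B)
    (ε : ℝ) (hε : 0 < ε) (hAB : μ (symmDiff A B) < μ A * ENNReal.ofReal ε) :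
    d (ProbabilityTheory.cond μ A) (ProbabilityTheory.cond μ B) ≤ 2 * ε := by
  classical
  -- real-valued quantities
  set a := (μ A).toReal with ha_def
  set b := (μ B).toReal with hb_def
  set s := (μ (symmDiff A B)).toReal with hs_def
  have hAfin : μ A ≠ ⊤ := measure_ne_top μ A
  have hBfin : μ B ≠ ⊤ := measure_ne_top μ B
  have hSfin : μ (symmDiff A B) ≠ ⊤ := measure_ne_top μ _
  have ha : 0 < a := ENNReal.toReal_pos hApos.ne' hAfin
  have hb : 0 < b := ENNReal.toReal_pos hBpos.ne' hBfin
  have hs0 : 0 ≤ s := ENNReal.toReal_nonneg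
  have hsa : s < a * ε := by
    have hfin : μ A * ENNReal.ofReal ε ≠ ⊤ := ENNReal.mul_ne_top hAfin ENNReal.ofReal_ne_top
    have := (ENNReal.toReal_lt_toReal hSfin hfin).mpr hAB
    rwa [ENNReal.toReal_mul, ENNReal.toReal_ofReal hε.le] at this
  -- key per-function bound
  have key : ∀ g : C(X, ℝ),
      |(∫ x, g x ∂(ProbabilityTheory.cond μ A)) - ∫ x, g x ∂(ProbabilityTheory.cond μ B)|
        ≤ 2 * ε * ‖g‖ := by
    intro g
    set M := ‖g‖ with hM_def
    have hM : 0 ≤ M := norm_nonneg g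
    have hgb : ∀ x : X, ‖g x‖ ≤ M := fun x => g.norm_coe_le_norm x
    have hint : Integrable (⇑g) μ := by
      have h := g.continuous.continuousOn.integrableOn_compact (μ := μ) (isCompact_univ (X := X))
      rwa [integrableOn_univ] at h
    set JA := ∫ x in A, g x ∂μ with hJA_def
    set JB := ∫ x in B, g x ∂μ with hJB_def
    have hcondA : (∫ x, g x ∂(ProbabilityTheory.cond μ A)) = a⁻¹ * JA := by
      rw [ProbabilityTheory.cond, integral_smul_measure, ENNReal.toReal_inv, smul_eq_mul]
    have hcondB : (∫ x, g x ∂(ProbabilityTheory.cond μ B)) = b⁻¹ * JB := by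
      rw [ProbabilityTheory.cond, integral_smul_measure, ENNReal.toReal_inv, smul_eq_mul]
    -- |JB| ≤ M * b
    have hJBle : |JB| ≤ M * b := by
      have := norm_setIntegral_le_of_norm_le_const (μ := μ) (s := B) (f := ⇑g)
        (lt_top_iff_ne_top.mpr hBfin) (fun x _ => hgb x)
      rw [Real.norm_eq_abs] at this; exact this
    -- |JA - JB| ≤ M * s
    have hdiffle : |JA - JB| ≤ M * s := by
      have hd1 : Disjoint (A ∩ B) (A \ B) := by
        rw [Set.disjoint_left]; rintro x ⟨-, hxB⟩ ⟨-, h⟩; exact h hxB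
      have hd2 : Disjoint (A ∩ B) (B \ A) := by
        rw [Set.disjoint_left]; rintro x ⟨hxA, -⟩ ⟨-, h⟩; exact h hxA
      have hAB1 : JA = (∫ x in A ∩ B, g x ∂μ) + ∫ x in A \ B, g x ∂μ := by
        have h := setIntegral_union hd1 (hA.diff hB) hint.integrableOn hint.integrableOn
        rwa [Set.inter_union_diff] at h
      have hBB1 : JB = (∫ x in A ∩ B, g x ∂μ) + ∫ x in B \ A, g x ∂μ := by
        have h := setIntegral_union hd2 (hB.diff hA) hint.integrableOn hint.integrableOn
        rwa [show A ∩ B ∪ B \ A = B from by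
          rw [Set.inter_comm]; exact Set.inter_union_diff B A] at h
      have h1 : |∫ x in A \ B, g x ∂μ| ≤ M * (μ (A \ B)).toReal := by
        have := norm_setIntegral_le_of_norm_le_const (μ := μ) (s := A \ B) (f := ⇑g)
          (lt_top_iff_ne_top.mpr (measure_ne_top μ _)) (fun x _ => hgb x)
        rw [Real.norm_eq_abs] at this; exact this
      have h2 : |∫ x in B \ A, g x ∂μ| ≤ M * (μ (B \ A)).toReal := by
        have := norm_setIntegral_le_of_norm_le_const (μ := μ) (s := B \ A) (f := ⇑g)
          (lt_top_iff_ne_top.mpr (measure_ne_top μ _)) (fun x _ => hgb x)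
        rw [Real.norm_eq_abs] at this; exact this
      have hsum : s = (μ (A \ B)).toReal + (μ (B \ A)).toReal := by
        rw [hs_def, measure_symmDiff_eq hA.nullMeasurableSet hB.nullMeasurableSet,
          ENNReal.toReal_add (measure_ne_top μ _) (measure_ne_top μ _)]
      calc |JA - JB| = |(∫ x in A \ B, g x ∂μ) - ∫ x in B \ A, g x ∂μ| := by
            rw [hAB1, hBB1]; ring_nf
        _ ≤ |∫ x in A \ B, g x ∂μ| + |∫ x in B \ A, g x ∂μ| := abs_sub _ _
        _ ≤ M * (μ (A \ B)).toReal + M * (μ (B \ A)).toReal := add_le_add h1 h2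
        _ = M * s := by rw [hsum]; ring
    -- |b - a| ≤ s
    have hbale : |b - a| ≤ s := by
      have := abs_measureReal_sub_le_measureReal_symmDiff (μ := μ)
        hB.nullMeasurableSet hA.nullMeasurableSet
      rwa [symmDiff_comm] at this
    rw [hcondA, hcondB]
    have e1 : a⁻¹ * JA - b⁻¹ * JB = a⁻¹ * (JA - JB) + ((b - a) / (a * b)) * JB := by
      field_simp
      ring
    calc |a⁻¹ * JA - b⁻¹ * JB|
        = |a⁻¹ * (JA - JB) + ((b - a) / (a * b)) * JB| := by rw [e1]
      _ ≤ |a⁻¹ * (JA - JB)| + |((b - a) / (a * b)) * JB| := abs_add_le _ _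
      _ = a⁻¹ * |JA - JB| + (|b - a| / (a * b)) * |JB| := by
          rw [abs_mul, abs_mul, abs_div, abs_of_pos (by positivity : (0:ℝ) < a * b),
            abs_of_pos (inv_pos.mpr ha)]
      _ ≤ a⁻¹ * (M * s) + (s / (a * b)) * (M * b) := by
          gcongr
      _ = 2 * (s / a) * M := by field_simp; ring
      _ ≤ 2 * ε * M := by
          have : s / a ≤ ε := (div_le_iff₀ ha).mpr (by linarith)
          have h2 : 2 * (s / a) ≤ 2 * ε := by linarith
          exact mul_le_mul_of_nonneg_right h2 hM
  -- now sum up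
  rw [hd]
  have term_le : ∀ m : ℕ,
      |(∫ x, f m x ∂(ProbabilityTheory.cond μ A)) - ∫ x, f m x ∂(ProbabilityTheory.cond μ B)| /
        (2 ^ (m + 1) * (‖f m‖ + 1)) ≤ 2 * ε / 2 / 2 ^ m := by
    intro m
    have hden : (0:ℝ) < 2 ^ (m + 1) * (‖f m‖ + 1) := by positivity
    have h1 : |(∫ x, f m x ∂(ProbabilityTheory.cond μ A)) -
        ∫ x, f m x ∂(ProbabilityTheory.cond μ B)| ≤ 2 * ε * (‖f m‖ + 1) := by
      refine le_trans (key (f m)) ?_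
      have : ‖f m‖ ≤ ‖f m‖ + 1 := by linarith
      nlinarith [norm_nonneg (f m)]
    calc |(∫ x, f m x ∂(ProbabilityTheory.cond μ A)) -
          ∫ x, f m x ∂(ProbabilityTheory.cond μ B)| / (2 ^ (m + 1) * (‖f m‖ + 1))
        ≤ 2 * ε * (‖f m‖ + 1) / (2 ^ (m + 1) * (‖f m‖ + 1)) := by
          gcongr
      _ = 2 * ε / 2 ^ (m + 1) := by
          field_simp
      _ = 2 * ε / 2 / 2 ^ m := by
          rw [pow_succ, div_div]
          ring_nf
  have hterm_nonneg : ∀ m : ℕ, 0 ≤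
      |(∫ x, f m x ∂(ProbabilityTheory.cond μ A)) - ∫ x, f m x ∂(ProbabilityTheory.cond μ B)| /
        (2 ^ (m + 1) * (‖f m‖ + 1)) := by
    intro m; positivity
  have hsum2 : Summable fun m : ℕ => 2 * ε / 2 / 2 ^ m := summable_geometric_two' _
  have hsum1 : Summable fun m : ℕ =>
      |(∫ x, f m x ∂(ProbabilityTheory.cond μ A)) - ∫ x, f m x ∂(ProbabilityTheory.cond μ B)| /
        (2 ^ (m + 1) * (‖f m‖ + 1)) :=
    Summable.of_nonneg_of_le hterm_nonneg term_le hsum2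
  calc (∑' m : ℕ,
      |(∫ x, f m x ∂(ProbabilityTheory.cond μ A)) - ∫ x, f m x ∂(ProbabilityTheory.cond μ B)| /
        (2 ^ (m + 1) * (‖f m‖ + 1)))
      ≤ ∑' m : ℕ, 2 * ε / 2 / 2 ^ m := hsum1.tsum_le_tsum term_le hsum2
    _ = 2 * ε := tsum_geometric_two' _


end Paper
end
end

section
/- For a topological dynamical system (X,T) with X a compact metric space and T continuous surjective, the following are equivalent: (1) (X,T) is periodic (there is m ∈ ℕ with Tᵐ = id); (2) the induced hyperspace system (K(X), T_K) is periodic; (3) (K(X), T_K) is pointwise periodic (every closed set C satisfies T_K^n C = C for some n ≥ 1). -/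
open MeasureTheory Topology Set Function TopologicalSpace

noncomputable section

namespace Paper

lemma TK_iterate_coe {X : Type*} [MetricSpace X] [CompactSpace X]
    (T : X → X) (hT : Continuous T) (n : ℕ) (C : NonemptyCompacts X) :
    (((TK T hT)^[n] C : NonemptyCompacts X) : Set X) = T^[n] '' (C : Set X) := by
  induction n with
  | zero => simp
  | succ n ih =>
    rw [Function.iterate_succ_apply']
    show T '' (((TK T hT)^[n] C : NonemptyCompacts X) : Set X) = _
    rw [ih, Set.image_image]
    ext z
    simp [Function.iterate_succ_apply']

lemma periodic_of_TK_pointwise {X : Type*} [MetricSpace X] [CompactSpace X]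
    (T : X → X) (hT : Continuous T)
    (h : IsPointwisePeriodic (TK T hT)) : IsPeriodicSystem T := by
  classical
  -- Step A: every point of X is periodic
  have hpt : ∀ x : X, x ∈ Function.periodicPts T := by
    intro x
    obtain ⟨n, hn, hC⟩ := h ⟨⟨{x}, isCompact_singleton⟩, Set.singleton_nonempty x⟩
    have hs : T^[n] '' ({x} : Set X) = {x} := by
      have h2 := TK_iterate_coe T hT n ⟨⟨{x}, isCompact_singleton⟩, Set.singleton_nonempty x⟩
      rw [hC] at h2
      exact h2.symm
    refine Function.mk_mem_periodicPts hn ?_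
    have : T^[n] x ∈ ({x} : Set X) := by
      rw [← hs]; exact ⟨x, rfl, rfl⟩
    simpa [Function.IsPeriodicPt, Function.IsFixedPt] using this
  -- Step B: minimal periods are bounded
  have hbdd : ∃ B : ℕ, ∀ x : X, Function.minimalPeriod T x ≤ B := by
    by_contra hub
    push_neg at hub
    choose f hf using hub
    -- sequence with strictly increasing minimal periods
    let g : ℕ → X := fun k => Nat.rec (f 0)
      (fun _ prev => f (Function.minimalPeriod T prev)) k
    have hgmono : StrictMono fun k => Function.minimalPeriod T (g k) :=
      strictMono_nat_of_lt_succ fun k => hf _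
    obtain ⟨x, -, φ, hφ, hconv⟩ :=
      isCompact_univ.tendsto_subseq (fun k => Set.mem_univ (g k))
    set p' := Function.minimalPeriod T x with hp'
    set y : ℕ → X := fun k => g (φ (k + (p' + 1))) with hy
    have hqmono : StrictMono fun k => Function.minimalPeriod T (y k) := by
      intro a b hab
      exact hgmono (hφ (by omega))
    have hqge : ∀ k, k + (p' + 1) ≤ Function.minimalPeriod T (y k) := by
      intro k
      calc k + (p' + 1) ≤ φ (k + (p' + 1)) := hφ.le_apply
        _ ≤ Function.minimalPeriod T (g (φ (k + (p' + 1)))) := hgmono.le_apply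
    have hyconv : Filter.Tendsto y Filter.atTop (nhds x) := by
      have : Filter.Tendsto (fun k => k + (p' + 1)) Filter.atTop Filter.atTop :=
        Filter.tendsto_add_atTop_nat _
      exact hconv.comp this
    set C : NonemptyCompacts X :=
      ⟨⟨insert x (Set.range y), hyconv.isCompact_insert_range⟩, ⟨x, Set.mem_insert _ _⟩⟩
    obtain ⟨n, hn, hC⟩ := h C
    have hCset : T^[n] '' (insert x (Set.range y)) = insert x (Set.range y) := by
      have h2 := TK_iterate_coe T hT n C
      rw [hC] at h2
      exact h2.symm
    have hmem : T^[n] (y n) ∈ insert x (Set.range y) := by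
      rw [← hCset]
      exact ⟨y n, Set.mem_insert_of_mem _ ⟨n, rfl⟩, rfl⟩
    have hq : Function.minimalPeriod T (T^[n] (y n)) = Function.minimalPeriod T (y n) :=
      Function.minimalPeriod_apply_iterate (hpt (y n)) n
    rcases hmem with h1 | ⟨j, hj⟩
    · -- T^[n] (y n) = x : then min period of y n equals p', but it is > p'
      rw [h1, ← hp'] at hq
      have := hqge n
      omega
    · -- T^[n] (y n) = y j
      rw [← hj] at hq
      have hnj : j = n := hqmono.injective hq
      have hper : Function.IsPeriodicPt T n (y n) := by
        have h3 : T^[n] (y n) = y n := by rw [← hj, hnj]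
        exact h3
      have hle : Function.minimalPeriod T (y n) ≤ n :=
        Nat.le_of_dvd hn hper.minimalPeriod_dvd
      have := hqge n
      omega
  -- Step C: conclude periodicity
  obtain ⟨B, hB⟩ := hbdd
  refine ⟨Nat.factorial B, Nat.factorial_pos B, funext fun x => ?_⟩
  have hpos : 0 < Function.minimalPeriod T x :=
    Function.minimalPeriod_pos_of_mem_periodicPts (hpt x)
  have hdvd : Function.minimalPeriod T x ∣ Nat.factorial B :=
    Nat.dvd_factorial hpos (hB x)
  exact Function.isPeriodicPt_iff_minimalPeriod_dvd.mpr hdvd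

lemma TK_periodic_of_periodic {X : Type*} [MetricSpace X] [CompactSpace X]
    (T : X → X) (hT : Continuous T)
    (h : IsPeriodicSystem T) : IsPeriodicSystem (TK T hT) := by
  obtain ⟨m, hm, hTm⟩ := h
  refine ⟨m, hm, funext fun C => ?_⟩
  apply NonemptyCompacts.ext
  rw [TK_iterate_coe, hTm]
  simp

theorem periodic_iff_hyperspace_periodic {X : Type*} [MetricSpace X] [CompactSpace X]
    (T : X → X) (hT : Continuous T) (hTs : Surjective T) :
    (IsPeriodicSystem T ↔ IsPeriodicSystem (TK T hT)) ∧
    (IsPeriodicSystem (TK T hT) ↔ IsPointwisePeriodic (TK T hT)) := by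
  have hK_pw : IsPeriodicSystem (TK T hT) → IsPointwisePeriodic (TK T hT) := by
    rintro ⟨m, hm, heq⟩ C
    exact ⟨m, hm, by rw [heq]; rfl⟩
  refine ⟨⟨TK_periodic_of_periodic T hT, fun hK => periodic_of_TK_pointwise T hT (hK_pw hK)⟩,
    ⟨hK_pw, fun hpw => TK_periodic_of_periodic T hT (periodic_of_TK_pointwise T hT hpw)⟩⟩

end Paper
end
end

section
/- Let X = {0} ∪ {1/n : n ∈ ℕ} with subspace topology from ℝ, and let T : X → X fix 0 and 1, and for each n ∈ ℕ cyclically permute the block {1/2ⁿ, 1/(2ⁿ+1), ..., 1/(2^{n+1}−1)} by T(1/2ⁿ) = 1/(2ⁿ+1), ..., T(1/(2^{n+1}−1)) = 1/2ⁿ. Then (X,T) is pointwise periodic, but the closed set K = {0} ∪ {1/2ⁿ : n ∈ ℤ₊} is not a periodic point of the induced map T_K on the hyperspace K(X). -/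
open MeasureTheory Topology Set Function TopologicalSpace

noncomputable section

namespace Paper

theorem pointwise_periodic_not_hyperspace_periodic
    (X5 : Set ℝ) (hX5 : X5 = {0} ∪ {x : ℝ | ∃ n : ℕ, 0 < n ∧ x = 1 / (n : ℝ)})
    (T : X5 → X5) (hTc : Continuous T)
    (hT0 : ∀ x : X5, (x : ℝ) = 0 → T x = x)
    (hT1 : ∀ x : X5, (x : ℝ) = 1 → T x = x)
    (hTmid : ∀ n k : ℕ, 0 < n → 2 ^ n ≤ k → k < 2 ^ (n + 1) - 1 →
      ∀ x : X5, (x : ℝ) = 1 / (k : ℝ) → (T x : ℝ) = 1 / ((k : ℝ) + 1))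
    (hTend : ∀ n : ℕ, 0 < n → ∀ x : X5, (x : ℝ) = 1 / ((2 : ℝ) ^ (n + 1) - 1) →
      (T x : ℝ) = 1 / (2 : ℝ) ^ n)
    (K : NonemptyCompacts X5)
    (hK : (K : Set X5) = {x : X5 | (x : ℝ) = 0 ∨ ∃ n : ℕ, (x : ℝ) = 1 / (2 : ℝ) ^ n}) :
    IsPointwisePeriodic T ∧ ¬ IsPeriodicPoint (TK T hTc) K := by
  -- the "march" lemma: within a block, T advances 1/k to 1/(k+1)
  have march : ∀ (j : ℕ), 0 < j → ∀ (i k : ℕ), 2 ^ j ≤ k → k + i ≤ 2 ^ (j + 1) - 1 →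
      ∀ y : X5, (y : ℝ) = 1 / (k : ℝ) → ((T^[i] y : X5) : ℝ) = 1 / ((k + i : ℕ) : ℝ) := by
    intro j hj i
    induction i with
    | zero => intro k _ _ y hy; simpa using hy
    | succ i ih =>
      intro k hk1 hk2 y hy
      rw [Function.iterate_succ_apply]
      have hk3 : k < 2 ^ (j + 1) - 1 := by omega
      have hTy : ((T y : X5) : ℝ) = 1 / ((k : ℝ) + 1) := hTmid j k hj hk1 hk3 y hy
      have h := ih (k + 1) (by omega) (by omega) (T y) (by push_cast [hTy]; ring)
      rw [h]
      congr 2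
      omega
  constructor
  · -- pointwise periodic
    intro x
    have hx : (x : ℝ) ∈ ({0} : Set ℝ) ∪ {x : ℝ | ∃ n : ℕ, 0 < n ∧ x = 1 / (n : ℝ)} := by
      rw [← hX5]; exact x.2
    rcases hx with hx0 | ⟨n, hn, hxn⟩
    · exact ⟨1, one_pos, by simpa using hT0 x hx0⟩
    · rcases eq_or_lt_of_le (show 1 ≤ n from hn) with h1 | h2
      · refine ⟨1, one_pos, ?_⟩
        have : (x : ℝ) = 1 := by rw [hxn, ← h1]; norm_num
        simpa using hT1 x this
      · -- n ≥ 2; let j = log 2 n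
        set j := Nat.log 2 n with hjdef
        have hj1 : 1 ≤ j := by
          rw [hjdef]
          exact (Nat.le_log_iff_pow_le one_lt_two (by omega)).mpr (by omega)
        have hjle : 2 ^ j ≤ n := Nat.pow_log_le_self 2 (by omega)
        have hjlt : n < 2 ^ (j + 1) := Nat.lt_pow_succ_log_self (by norm_num) n
        have hq : 2 ^ (j + 1) = 2 * 2 ^ j := by rw [pow_succ]; ring
        have hp1 : 1 ≤ 2 ^ j := Nat.one_le_two_pow
        refine ⟨2 ^ j, by positivity, ?_⟩
        set d1 := 2 ^ (j + 1) - 1 - n with hd1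
        have step1 : ((T^[d1] x : X5) : ℝ) = 1 / ((n + d1 : ℕ) : ℝ) :=
          march j hj1 d1 n hjle (by omega) x hxn
        have hnd1 : n + d1 = 2 ^ (j + 1) - 1 := by omega
        have hcast : ((2 ^ (j + 1) - 1 : ℕ) : ℝ) = (2 : ℝ) ^ (j + 1) - 1 := by
          push_cast [Nat.one_le_two_pow]; ring
        have step2 : ((T (T^[d1] x) : X5) : ℝ) = 1 / (2 : ℝ) ^ j := by
          apply hTend j hj1
          rw [step1, hnd1, hcast]
        have step3 : ((T^[n - 2 ^ j] (T (T^[d1] x)) : X5) : ℝ)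
            = 1 / ((2 ^ j + (n - 2 ^ j) : ℕ) : ℝ) := by
          apply march j hj1 (n - 2 ^ j) (2 ^ j) le_rfl (by omega)
          rw [step2]; push_cast; ring
        have hiter : T^[2 ^ j] x = T^[n - 2 ^ j] (T (T^[d1] x)) := by
          have : T^[n - 2 ^ j] (T (T^[d1] x))
              = T^[n - 2 ^ j] (T^[1] (T^[d1] x)) := by simp
          rw [this, ← Function.iterate_add_apply, ← Function.iterate_add_apply]
          congr 1
          omega
        have hn' : 2 ^ j + (n - 2 ^ j) = n := by omega
        rw [hn'] at step3
        apply Subtype.ext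
        rw [hiter, step3, hxn]
  · -- K is not a periodic point of the induced map
    rintro ⟨m, hm, heq⟩
    have hset : ∀ (C : NonemptyCompacts X5) (i : ℕ),
        (((TK T hTc)^[i] C : NonemptyCompacts X5) : Set X5) = T^[i] '' (C : Set X5) := by
      intro C i
      induction i with
      | zero => simp
      | succ i ih =>
        rw [Function.iterate_succ_apply', Function.iterate_succ']
        have : ((TK T hTc ((TK T hTc)^[i] C) : NonemptyCompacts X5) : Set X5)
            = T '' (((TK T hTc)^[i] C : NonemptyCompacts X5) : Set X5) := rfl
        rw [this, ih, ← Set.image_comp]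
    have hKset : T^[m] '' (K : Set X5) = (K : Set X5) := by
      rw [← hset K m, heq]
    -- the point 1/2^m
    have hy5 : (1 / ((2 ^ m : ℕ) : ℝ)) ∈ X5 := by
      rw [hX5]
      exact Or.inr ⟨2 ^ m, Nat.pow_pos (by norm_num), rfl⟩
    set y : X5 := ⟨1 / ((2 ^ m : ℕ) : ℝ), hy5⟩ with hydef
    have hyK : y ∈ (K : Set X5) := by
      rw [hK]
      exact Or.inr ⟨m, by push_cast [hydef]; ring⟩
    have hp1 : 1 ≤ 2 ^ m := Nat.one_le_two_pow
    have hmlt : m < 2 ^ m := Nat.lt_two_pow_self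
    have hq : 2 ^ (m + 1) = 2 * 2 ^ m := by rw [pow_succ]; ring
    have hz : ((T^[m] y : X5) : ℝ) = 1 / ((2 ^ m + m : ℕ) : ℝ) :=
      march m hm m (2 ^ m) le_rfl (by omega) y rfl
    have hzK : T^[m] y ∈ (K : Set X5) := by
      rw [← hKset]
      exact ⟨y, hyK, rfl⟩
    rw [hK] at hzK
    rcases hzK with hz0 | ⟨p, hzp⟩
    · rw [hz] at hz0
      have : ((2 ^ m + m : ℕ) : ℝ) ≠ 0 := by positivity
      exact (one_div_ne_zero this) hz0
    · rw [hz] at hzp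
      have hcast : ((2 ^ m + m : ℕ) : ℝ) = ((2 ^ p : ℕ) : ℝ) := by
        have h1 : ((2 ^ m + m : ℕ) : ℝ) ≠ 0 := by positivity
        have h2 : ((2 ^ p : ℕ) : ℝ) ≠ 0 := by positivity
        field_simp at hzp
        push_cast at hzp ⊢
        linarith
      have hnat : 2 ^ m + m = 2 ^ p := Nat.cast_injective hcast
      have h1 : 2 ^ m < 2 ^ p := by omega
      have h2 : m < p := (Nat.pow_lt_pow_iff_right (by norm_num)).mp h1
      have h3 : 2 ^ (m + 1) ≤ 2 ^ p := Nat.pow_le_pow_right (by norm_num) (by omega)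
      omega

end Paper
end
end

section
/- If (X,T) is a distal topological dynamical system, then the set of distal points of the induced system (M(X), T_M) on the space of probability measures is dense in M(X). -/
open MeasureTheory Topology Set Function TopologicalSpace

noncomputable section

namespace Paper

lemma image_closure_of_compact {α β : Type*} [TopologicalSpace α] [CompactSpace α]
    [TopologicalSpace β] [T2Space β] {φ : α → β} (hφ : Continuous φ) (s : Set α) :
    φ '' closure s = closure (φ '' s) :=
  Subset.antisymm (image_closure_subset_closure_image hφ)
    (closure_minimal (Set.image_mono subset_closure)
      (isClosed_closure.isCompact.image hφ).isClosed)

section PaperAux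
open ENNReal NNReal BoundedContinuousFunction

variable {X : Type*} [MetricSpace X] [CompactSpace X] [MeasurableSpace X] [BorelSpace X]
section
open Finset
theorem exists_perm_of_count_eq {α : Type*} [DecidableEq α] :
    ∀ {n : ℕ} (u v : Fin n → α),
    (∀ a : α, (univ.filter fun i => u i = a).card = (univ.filter fun i => v i = a).card) →
    ∃ σ : Equiv.Perm (Fin n), ∀ i, v i = u (σ i) := by
  have hcard : ∀ {m : ℕ} (w : Fin m → α) (a : α),
      (univ.filter fun i => w i = a).card = ∑ i : Fin m, if w i = a then 1 else 0 := by
    intro m w a; rw [Finset.sum_boole]; simp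
  intro n
  induction n with
  | zero => exact fun u v _ => ⟨1, fun i => i.elim0⟩
  | succ n ih =>
    intro u v h
    have h0 : (univ.filter fun i => u i = v 0).Nonempty := by
      rw [← Finset.card_pos, h (v 0)]
      exact Finset.card_pos.mpr ⟨0, by simp⟩
    obtain ⟨j, hj⟩ : ∃ j, u j = v 0 := by
      obtain ⟨j, hj⟩ := h0
      exact ⟨j, (Finset.mem_filter.mp hj).2⟩
    have h' : ∀ a, (univ.filter fun i : Fin n => u (j.succAbove i) = a).card
        = (univ.filter fun i : Fin n => v i.succ = a).card := by
      intro a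
      have hu2 := hcard u a
      rw [Fin.sum_univ_succAbove (fun i => if u i = a then 1 else 0) j] at hu2
      have hv2 := hcard v a
      rw [Fin.sum_univ_succ (fun i => if v i = a then 1 else 0)] at hv2
      have hha := h a
      rw [hu2, hv2, hj] at hha
      rw [hcard (fun i => u (j.succAbove i)) a, hcard (fun i => v i.succ) a]
      omega
    obtain ⟨τ, hτ⟩ := ih (fun i => u (j.succAbove i)) (fun i => v i.succ) h'
    refine ⟨(finSuccEquiv' 0).trans ((Equiv.optionCongr τ).trans (finSuccEquiv' j).symm), ?_⟩
    intro i
    induction i using Fin.cases with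
    | zero => simp [hj]
    | succ i =>
      simp only [Equiv.trans_apply]
      rw [show ((finSuccEquiv' (0 : Fin (n+1))) i.succ) = some i by
        simpa [Fin.succAbove_zero] using finSuccEquiv'_succAbove (0 : Fin (n+1)) i]
      simpa using hτ i

end

def Phi (n : ℕ) (y : Fin (n+1) → X) : ProbabilityMeasure X :=
  ⟨((n:ℝ≥0∞)+1)⁻¹ • ∑ i : Fin (n+1), Measure.dirac (y i), by
    constructor
    simp only [Measure.smul_apply, Measure.finset_sum_apply, Measure.dirac_apply_of_mem
      (Set.mem_univ _), Finset.sum_const, Finset.card_univ, Fintype.card_fin, smul_eq_mul,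
      nsmul_eq_mul, mul_one]
    rw [Nat.cast_add, Nat.cast_one]
    exact ENNReal.inv_mul_cancel (by simp) (by simp)⟩

lemma Phi_toMeasure (n : ℕ) (y : Fin (n+1) → X) :
    (Phi n y : Measure X) = ((n:ℝ≥0∞)+1)⁻¹ • ∑ i : Fin (n+1), Measure.dirac (y i) := rfl

lemma integral_Phi (n : ℕ) (y : Fin (n+1) → X) (f : X →ᵇ ℝ) :
    ∫ x, f x ∂(Phi n y : Measure X) = ((n:ℝ)+1)⁻¹ * ∑ i : Fin (n+1), f (y i) := by
  rw [Phi_toMeasure, integral_smul_measure, integral_finset_sum_measure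
    (fun i _ => f.integrable _)]
  simp only [integral_dirac]
  rw [smul_eq_mul]
  congr 1
  rw [← ENNReal.ofReal_natCast, ← ENNReal.ofReal_one, ← ENNReal.ofReal_add (by positivity)
    zero_le_one, ← ENNReal.ofReal_inv_of_pos (by positivity), ENNReal.toReal_ofReal (by positivity)]

lemma continuous_Phi (n : ℕ) : Continuous (Phi (X := X) n) := by
  rw [continuous_iff_continuousAt]
  intro y
  have := ProbabilityMeasure.tendsto_iff_forall_integral_tendsto
    (μs := Phi (X := X) n) (μ := Phi n y) (F := 𝓝 y)
  rw [ContinuousAt, this]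
  intro f
  simp only [integral_Phi n _ f]
  apply Continuous.tendsto
  exact continuous_const.mul (continuous_finset_sum _ fun i _ =>
    f.continuous.comp (continuous_apply i))
lemma TM_Phi (n : ℕ) (T : X → X) (hT : Continuous T) (y : Fin (n+1) → X) :
    TM T hT (Phi n y) = Phi n (fun i => T (y i)) := by
  apply ProbabilityMeasure.toMeasure_injective
  rw [TM, ProbabilityMeasure.toMeasure_map, Phi_toMeasure, Phi_toMeasure]
  rw [Measure.map_smul]
  congr 1
  simp only [← Measure.mapₗ_apply_of_measurable hT.measurable, map_sum]
  exact Finset.sum_congr rfl fun i _ => by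
    rw [Measure.mapₗ_apply_of_measurable hT.measurable, Measure.map_dirac' hT.measurable]
lemma Phi_perm (n : ℕ) (y : Fin (n+1) → X) (σ : Equiv.Perm (Fin (n+1))) :
    Phi n (fun i => y (σ i)) = Phi n y := by
  apply ProbabilityMeasure.toMeasure_injective
  rw [Phi_toMeasure, Phi_toMeasure]
  congr 1
  exact Equiv.sum_comp σ (fun i => Measure.dirac (y i))
lemma Phi_eq_iff_perm {n : ℕ} {u v : Fin (n+1) → X} (h : Phi n u = Phi n v) :
    ∃ σ : Equiv.Perm (Fin (n+1)), ∀ i, v i = u (σ i) := by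
  classical
  have hm : (∑ i : Fin (n+1), Measure.dirac (u i)) = ∑ i : Fin (n+1), Measure.dirac (v i) := by
    have h2 := congrArg (fun μ : ProbabilityMeasure X => ((n:ℝ≥0∞)+1) • (μ : Measure X)) h
    simp only [Phi_toMeasure, smul_smul] at h2
    rwa [ENNReal.mul_inv_cancel (by simp) (by simp), one_smul, one_smul] at h2
  apply exists_perm_of_count_eq
  intro a
  have := congrArg (fun μ : Measure X => μ {a}) hm
  simp only [Measure.finset_sum_apply] at this
  have hcount : ∀ w : Fin (n+1) → X,
      (∑ i : Fin (n+1), Measure.dirac (w i) {a})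
        = ((Finset.univ.filter fun i => w i = a).card : ℝ≥0∞) := by
    intro w
    rw [← Finset.sum_boole]
    exact Finset.sum_congr rfl fun i _ => by
      rw [Measure.dirac_apply]
      simp [Set.indicator, Set.mem_singleton_iff]
  rw [hcount u, hcount v] at this
  exact_mod_cast this

lemma isDistalPoint_Phi (T : X → X) (hT : Continuous T) (h : IsDistalSystem T)
    (n : ℕ) (x : Fin (n+1) → X) : IsDistalPoint (TM T hT) (Phi n x) := by
  classical
  set F : (Fin (n+1) → X) → (Fin (n+1) → X) := fun y i => T (y i) with hF
  have hFc : Continuous F := continuous_pi fun i => hT.comp (continuous_apply i)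
  have hFk : ∀ (k : ℕ) (y : Fin (n+1) → X) (i : Fin (n+1)), F^[k] y i = T^[k] (y i) := by
    intro k
    induction k with
    | zero => intro y i; simp
    | succ k ihk =>
      intro y i
      rw [Function.iterate_succ_apply', Function.iterate_succ_apply']
      rw [hF]
      simp only []
      rw [ihk y i]
  have hTMk : ∀ (k : ℕ) (y : Fin (n+1) → X),
      (TM T hT)^[k] (Phi n y) = Phi n (F^[k] y) := by
    intro k
    induction k with
    | zero => intro y; simp
    | succ k ihk =>
      intro y
      rw [Function.iterate_succ_apply', ihk y, TM_Phi, Function.iterate_succ_apply']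
  intro ν hν hprox
  -- get y
  have hfun : (fun k : ℕ => (TM T hT)^[k] (Phi n x)) = Phi n ∘ (fun k : ℕ => F^[k] x) :=
    funext fun k => hTMk k x
  have hrange : (Set.range fun k : ℕ => (TM T hT)^[k] (Phi n x))
      = Phi n '' Set.range (fun k : ℕ => F^[k] x) := by
    rw [hfun, Set.range_comp]
  rw [orbitClosure, hrange, ← image_closure_of_compact (continuous_Phi n)] at hν
  obtain ⟨y, hy, rfl⟩ := hν
  -- proximal pair analysis
  obtain ⟨lam, hlam⟩ := hprox
  have hfun2 : (fun k : ℕ => ((TM T hT)^[k] (Phi n x), (TM T hT)^[k] (Phi n y)))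
      = Prod.map (Phi n) (Phi n) ∘ (fun k : ℕ => (F^[k] x, F^[k] y)) := by
    funext k
    simp [Prod.map, hTMk k x, hTMk k y]
  have hrange2 : (Set.range fun k : ℕ => ((TM T hT)^[k] (Phi n x), (TM T hT)^[k] (Phi n y)))
      = Prod.map (Phi n) (Phi n) '' Set.range (fun k : ℕ => (F^[k] x, F^[k] y)) := by
    rw [hfun2, Set.range_comp]
  rw [hrange2, ← image_closure_of_compact ((continuous_Phi n).prodMap (continuous_Phi n))]
    at hlam
  obtain ⟨⟨u, v⟩, huv, heq⟩ := hlam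
  have huv1 : Phi n u = lam := congrArg Prod.fst heq
  have huv2 : Phi n v = lam := congrArg Prod.snd heq
  obtain ⟨σ, hσ⟩ := Phi_eq_iff_perm (huv1.trans huv2.symm)
  set w : Fin (n+1) → X := fun j => y (σ⁻¹ j) with hw
  -- build proximality of (x, w) in the product system
  set ψ : ((Fin (n+1) → X) × (Fin (n+1) → X)) → ((Fin (n+1) → X) × (Fin (n+1) → X)) :=
    fun p => (p.1, fun j => p.2 (σ⁻¹ j)) with hψ
  have hψc : Continuous ψ := by
    apply Continuous.prodMk continuous_fst
    exact continuous_pi fun j => (continuous_apply _).comp continuous_snd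
  have hmem : ψ (u, v) ∈ closure (Set.range fun k : ℕ => (F^[k] x, F^[k] w)) := by
    have h1 : ψ '' Set.range (fun k : ℕ => (F^[k] x, F^[k] y))
        = Set.range (fun k : ℕ => (F^[k] x, F^[k] w)) := by
      rw [← Set.range_comp]
      have : ψ ∘ (fun k : ℕ => (F^[k] x, F^[k] y)) = fun k : ℕ => (F^[k] x, F^[k] w) := by
        funext k
        simp only [hψ, Function.comp_apply]
        refine Prod.ext rfl ?_
        funext j
        simp [hFk, hw]
      rw [this]
    have := image_closure_subset_closure_image hψc (Set.mem_image_of_mem ψ huv)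
    rwa [h1] at this
  have hψuv : ψ (u, v) = (u, u) := by
    refine Prod.ext rfl ?_
    funext j
    simp only [hψ]
    rw [hσ (σ⁻¹ j)]
    simp
  rw [hψuv] at hmem
  -- project to coordinates
  have hxw : ∀ j, x j = w j := by
    intro j
    refine h (x j) (w j) ⟨u j, ?_⟩
    have hπ : Continuous (fun p : ((Fin (n+1) → X) × (Fin (n+1) → X)) => (p.1 j, p.2 j)) := by
      fun_prop
    have h1 : (fun p : ((Fin (n+1) → X) × (Fin (n+1) → X)) => (p.1 j, p.2 j)) ''
        Set.range (fun k : ℕ => (F^[k] x, F^[k] w))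
        = Set.range (fun k : ℕ => (T^[k] (x j), T^[k] (w j))) := by
      rw [← Set.range_comp]
      have : (fun p : ((Fin (n+1) → X) × (Fin (n+1) → X)) => (p.1 j, p.2 j)) ∘
          (fun k : ℕ => (F^[k] x, F^[k] w))
          = fun k : ℕ => (T^[k] (x j), T^[k] (w j)) := by
        funext k
        simp [hFk]
      rw [this]
    have := image_closure_subset_closure_image hπ (Set.mem_image_of_mem _ hmem)
    rwa [h1] at this
  -- conclude
  have hyx : y = fun i => x (σ i) := by
    funext i
    have := hxw (σ i)
    simp only [hw] at this
    rw [this]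
    simp
  rw [hyx, Phi_perm]

lemma exists_Phi_approx (μ : ProbabilityMeasure X) {ε : ℝ} (hε : 0 < ε) :
    ∃ (n : ℕ) (y : Fin (n+1) → X), ∀ (f : X →ᵇ ℝ) (δ : ℝ), 0 ≤ δ →
      (∀ a b : X, dist a b ≤ ε → |f a - f b| ≤ δ) →
      |∫ x, f x ∂(Phi n y : Measure X) - ∫ x, f x ∂(μ : Measure X)| ≤ δ + 5 * (‖f‖ + 1) * ε := by
  classical
  have hXne : Nonempty X := by
    by_contra hc
    rw [not_nonempty_iff] at hc
    have h1 : (μ : Measure X) Set.univ = 1 := measure_univ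
    rw [Set.univ_eq_empty_iff.mpr hc, measure_empty] at h1
    exact zero_ne_one h1
  obtain ⟨As, hmeas, hbd, hdiam, hcover, hdisj⟩ :=
    SeparableSpace.exists_measurable_partition_diam_le X hε
  set W : ℕ → ℝ := fun i => ((μ : Measure X) (As i)).toReal with hWdef
  have hW0 : ∀ i, 0 ≤ W i := fun i => ENNReal.toReal_nonneg
  have htsum : ∑' i, (μ : Measure X) (As i) = 1 := by
    rw [← measure_iUnion hdisj hmeas, hcover, measure_univ]
  have hWsum : HasSum W 1 := by
    have h2 := ENNReal.hasSum_toReal (f := fun i => (μ : Measure X) (As i))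
      (by rw [htsum]; exact ENNReal.one_ne_top)
    rw [← ENNReal.tsum_toReal_eq (fun i => measure_ne_top _ _), htsum] at h2
    simpa using h2
  have hWle1 : ∀ s : Finset ℕ, ∑ i ∈ s, W i ≤ 1 :=
    fun s => sum_le_hasSum s (fun i _ => hW0 i) hWsum
  -- choose m with partial sum over range (m+1) > 1 - ε
  obtain ⟨m, hm⟩ : ∃ m : ℕ, 1 - ε < ∑ i ∈ Finset.range (m+1), W i := by
    have h3 := hWsum.tendsto_sum_nat
    have h4 : ∀ᶠ k in Filter.atTop, 1 - ε < ∑ i ∈ Finset.range k, W i :=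
      h3.eventually (eventually_gt_nhds (by linarith))
    obtain ⟨k, hk⟩ := h4.exists
    exact ⟨k, lt_of_lt_of_le hk (Finset.sum_le_sum_of_subset_of_nonneg
      (Finset.range_subset_range.mpr (Nat.le_succ k)) (fun i _ _ => hW0 i))⟩
  -- representative points
  set c : ℕ → X := fun i => if h : (As i).Nonempty then h.choose else Classical.arbitrary X
    with hcdef
  have hc : ∀ i, (As i).Nonempty → c i ∈ As i := by
    intro i h
    simp only [hcdef, dif_pos h]
    exact h.choose_spec
  -- number of atoms
  set K : ℕ := ⌈1/ε⌉₊ with hKdef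
  set n : ℕ := (m+1) * K + m with hndef
  have hfact : n + 1 = (m+1) * (K+1) := by rw [hndef]; ring
  have hNpos : (0:ℝ) < (n:ℝ) + 1 := by positivity
  have hmN : ((m:ℝ)+1) / ((n:ℝ)+1) ≤ ε := by
    have h5 : ((n:ℝ)+1) = ((m:ℝ)+1) * ((K:ℝ)+1) := by exact_mod_cast hfact
    rw [h5, div_le_iff₀ (by positivity)]
    have h6 : 1/ε ≤ (K:ℝ) + 1 := le_trans (Nat.le_ceil _) (by simp [hKdef])
    have h7 : 1 ≤ ε * ((K:ℝ)+1) := by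
      rw [div_le_iff₀ hε] at h6
      linarith
    nlinarith [mul_le_mul_of_nonneg_left h7 (by positivity : (0:ℝ) ≤ (m:ℝ)+1)]
  -- rounding
  set b : ℕ → ℕ := fun i => ⌊((n:ℝ)+1) * W i⌋₊ with hbdef
  have hbW : ∀ i, ((b i : ℝ)) ≤ ((n:ℝ)+1) * W i := fun i => Nat.floor_le (by positivity)
  have hWb : ∀ i, ((n:ℝ)+1) * W i ≤ (b i : ℝ) + 1 := fun i => (Nat.lt_floor_add_one _).le
  have hble : ∑ i ∈ Finset.range (m+1), b i ≤ n + 1 := by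
    have h7 : (↑(∑ i ∈ Finset.range (m+1), b i) : ℝ) ≤ (n:ℝ)+1 := by
      push_cast
      calc ∑ i ∈ Finset.range (m+1), (b i : ℝ)
          ≤ ∑ i ∈ Finset.range (m+1), ((n:ℝ)+1) * W i := Finset.sum_le_sum fun i _ => hbW i
        _ = ((n:ℝ)+1) * ∑ i ∈ Finset.range (m+1), W i := by rw [Finset.mul_sum]
        _ ≤ ((n:ℝ)+1) * 1 := by
            apply mul_le_mul_of_nonneg_left (hWle1 _) (by positivity)
        _ = (n:ℝ)+1 := mul_one _
    exact_mod_cast h7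
  set R : ℕ := (n+1) - ∑ i ∈ Finset.range (m+1), b i with hRdef
  set a : Fin (m+1) → ℕ := fun i => b i.val + (if i = 0 then R else 0) with hadef
  have hasum : ∑ i : Fin (m+1), a i = n + 1 := by
    rw [hadef]
    rw [Finset.sum_add_distrib, Finset.sum_ite_eq' Finset.univ (0 : Fin (m+1)) (fun _ => R)]
    rw [Fin.sum_univ_eq_sum_range (fun i => b i) (m+1)]
    simp only [Finset.mem_univ, if_pos]
    omega
  -- ℓ¹ error of rounding
  have hRsmall : (R:ℝ) / ((n:ℝ)+1) ≤ 2 * ε := by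
    have h8 : ((R:ℝ)) = ((n:ℝ)+1) - ∑ i ∈ Finset.range (m+1), (b i : ℝ) := by
      rw [hRdef]
      push_cast [hble]
      ring
    have h9 : ((n:ℝ)+1) * (∑ i ∈ Finset.range (m+1), W i) - (m+1) ≤
        ∑ i ∈ Finset.range (m+1), (b i : ℝ) := by
      calc ((n:ℝ)+1) * (∑ i ∈ Finset.range (m+1), W i) - (m+1)
          = ∑ i ∈ Finset.range (m+1), (((n:ℝ)+1) * W i - 1) := by
            rw [Finset.sum_sub_distrib, ← Finset.mul_sum]
            simp
        _ ≤ ∑ i ∈ Finset.range (m+1), (b i : ℝ) := by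
            apply Finset.sum_le_sum
            intro i _
            have := hWb i
            linarith
    rw [div_le_iff₀ hNpos, h8]
    have h10 : ((n:ℝ)+1) * (1 - ε) ≤ ((n:ℝ)+1) * ∑ i ∈ Finset.range (m+1), W i :=
      mul_le_mul_of_nonneg_left hm.le (by positivity)
    have h11 : ((m:ℝ)+1) ≤ ε * ((n:ℝ)+1) := by
      rw [div_le_iff₀ hNpos] at hmN
      linarith
    nlinarith
  have hl1 : ∑ i : Fin (m+1), |(a i : ℝ) / ((n:ℝ)+1) - W i| ≤ 4 * ε := by
    have hterm : ∀ i : Fin (m+1), |(a i : ℝ) / ((n:ℝ)+1) - W i|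
        ≤ 1/((n:ℝ)+1) + (if i = 0 then (R:ℝ)/((n:ℝ)+1) else 0) := by
      intro i
      have hb1 : |(b i.val : ℝ) / ((n:ℝ)+1) - W i.val| ≤ 1/((n:ℝ)+1) := by
        have e1 : (b i.val:ℝ)/((n:ℝ)+1) - W i.val
            = ((b i.val:ℝ) - ((n:ℝ)+1)*W i.val)/((n:ℝ)+1) := by
          field_simp
        have e2 : |(b i.val:ℝ) - ((n:ℝ)+1)*W i.val| ≤ 1 := by
          rw [abs_le]
          constructor
          · linarith [hWb i.val]
          · linarith [hbW i.val]
        calc |(b i.val : ℝ) / ((n:ℝ)+1) - W i.val|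
            = |(b i.val:ℝ) - ((n:ℝ)+1)*W i.val| / ((n:ℝ)+1) := by
              rw [e1, abs_div, abs_of_pos hNpos]
          _ ≤ 1/((n:ℝ)+1) := by gcongr
      rw [hadef]
      by_cases hi : i = 0
      · subst hi
        simp only [if_pos rfl]
        push_cast
        rw [add_div]
        calc |((b (0:Fin (m+1)).val : ℝ)/((n:ℝ)+1) + (R:ℝ)/((n:ℝ)+1)) - W (0:Fin (m+1)).val|
            ≤ |(b (0:Fin (m+1)).val : ℝ)/((n:ℝ)+1) - W (0:Fin (m+1)).val| + (R:ℝ)/((n:ℝ)+1) := by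
              have := abs_add_le ((b (0:Fin (m+1)).val : ℝ)/((n:ℝ)+1) - W (0:Fin (m+1)).val)
                ((R:ℝ)/((n:ℝ)+1))
              rw [abs_of_nonneg (by positivity : (0:ℝ) ≤ (R:ℝ)/((n:ℝ)+1))] at this
              calc |((b (0:Fin (m+1)).val : ℝ)/((n:ℝ)+1) + (R:ℝ)/((n:ℝ)+1)) - W (0:Fin (m+1)).val|
                  = |((b (0:Fin (m+1)).val : ℝ)/((n:ℝ)+1) - W (0:Fin (m+1)).val) + (R:ℝ)/((n:ℝ)+1)| := by
                    ring_nf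
                _ ≤ _ := this
          _ ≤ 1/((n:ℝ)+1) + (R:ℝ)/((n:ℝ)+1) := by
              exact add_le_add (hb1) le_rfl
      · simp only [hi, if_neg hi, if_false]
        push_cast
        simpa using hb1
    calc ∑ i : Fin (m+1), |(a i : ℝ) / ((n:ℝ)+1) - W i|
        ≤ ∑ i : Fin (m+1), (1/((n:ℝ)+1) + (if i = 0 then (R:ℝ)/((n:ℝ)+1) else 0)) :=
          Finset.sum_le_sum fun i _ => hterm i
      _ = ((m:ℝ)+1)/((n:ℝ)+1) + (R:ℝ)/((n:ℝ)+1) := by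
          rw [Finset.sum_add_distrib, Finset.sum_ite_eq' Finset.univ (0 : Fin (m+1))]
          simp [Finset.card_univ]
          ring
      _ ≤ ε + 2*ε := add_le_add hmN hRsmall
      _ ≤ 4 * ε := by linarith
  -- build the tuple
  have hcard : Fintype.card (Σ i : Fin (m+1), Fin (a i)) = Fintype.card (Fin (n+1)) := by
    simp [Fintype.card_sigma, hasum]
  set e : Fin (n+1) ≃ (Σ i : Fin (m+1), Fin (a i)) := (Fintype.equivOfCardEq hcard).symm
    with hedef
  refine ⟨n, fun j => c ((e j).1 : ℕ), ?_⟩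
  intro f δ hδ hmod
  -- value of the Phi-integral
  have hPhiInt : ∫ x, f x ∂(Phi n (fun j => c ((e j).1 : ℕ)) : Measure X)
      = ∑ i : Fin (m+1), ((a i : ℝ)/((n:ℝ)+1)) * f (c i) := by
    rw [integral_Phi]
    have h13 : ∑ j : Fin (n+1), f (c ((e j).1 : ℕ))
        = ∑ s : Σ i : Fin (m+1), Fin (a i), f (c (s.1 : ℕ)) :=
      Equiv.sum_comp e (fun s => f (c (s.1 : ℕ)))
    rw [h13, ← Finset.univ_sigma_univ, Finset.sum_sigma]
    simp only [Finset.sum_const, Finset.card_univ, Fintype.card_fin, nsmul_eq_mul]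
    rw [Finset.mul_sum]
    exact Finset.sum_congr rfl fun i _ => by ring
  rw [hPhiInt]
  -- decompose the μ integral
  set I : ℕ → ℝ := fun i => ∫ x in As i, f x ∂(μ : Measure X) with hIdef
  have hIbound : ∀ i, |I i| ≤ ‖f‖ * W i := by
    intro i
    rw [hIdef]
    exact norm_setIntegral_le_of_norm_le_const (measure_lt_top _ _)
      (fun x _ => f.norm_coe_le_norm x)
  have hIsummable : Summable I :=
    Summable.of_norm_bounded (hWsum.summable.mul_left ‖f‖) hIbound
  have hWsummable2 := hWsum.summable
  have hItotal : ∫ x, f x ∂(μ : Measure X) = ∑' i, I i := by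
    rw [hIdef]
    rw [← setIntegral_univ, ← hcover]
    exact integral_iUnion hmeas hdisj (f.integrable _).integrableOn
  have hsplitI := Summable.sum_add_tsum_nat_add (m+1) hIsummable
  have hsplitW := Summable.sum_add_tsum_nat_add (m+1) hWsummable2
  rw [hWsum.tsum_eq] at hsplitW
  -- tail estimate
  have htail : |∑' i, I (i + (m+1))| ≤ ‖f‖ * ε := by
    have h14 : |∑' i, I (i + (m+1))| ≤ ∑' i, ‖f‖ * W (i + (m+1)) := by
      calc |∑' i, I (i + (m+1))| ≤ ∑' i, |I (i + (m+1))| := by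
            have := norm_tsum_le_tsum_norm (f := fun i => I (i + (m+1)))
              ((hIsummable.comp_injective (add_left_injective (m+1))).abs)
            simpa [Real.norm_eq_abs] using this
        _ ≤ ∑' i, ‖f‖ * W (i + (m+1)) := by
            apply Summable.tsum_le_tsum (fun i => hIbound _)
              ((hIsummable.comp_injective (add_left_injective (m+1))).abs)
              ((hWsummable2.mul_left ‖f‖).comp_injective (add_left_injective (m+1)))
    have h15 : ∑' i, ‖f‖ * W (i + (m+1)) = ‖f‖ * (1 - ∑ i ∈ Finset.range (m+1), W i) := by
      rw [_root_.tsum_mul_left]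
      congr 1
      linarith [hsplitW]
    rw [h15] at h14
    calc |∑' i, I (i + (m+1))| ≤ ‖f‖ * (1 - ∑ i ∈ Finset.range (m+1), W i) := h14
      _ ≤ ‖f‖ * ε := by
          apply mul_le_mul_of_nonneg_left _ (norm_nonneg f)
          linarith
  -- block estimate
  have hblock : ∀ i, |I i - W i * f (c i)| ≤ δ * W i := by
    intro i
    by_cases hne : (As i).Nonempty
    · have hci := hc i hne
      have h16 : I i - W i * f (c i) = ∫ x in As i, (f x - f (c i)) ∂(μ : Measure X) := by
        rw [hIdef]
        rw [integral_sub (f.integrable _).integrableOn (integrableOn_const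
          (measure_lt_top _ _).ne)]
        rw [setIntegral_const]
        simp only [smul_eq_mul, hWdef]
        rfl
      rw [h16]
      have h17 : ∀ x ∈ As i, ‖f x - f (c i)‖ ≤ δ := by
        intro x hx
        apply hmod
        exact le_trans (Metric.dist_le_diam_of_mem (hbd i) hx hci) (hdiam i)
      have h18 := norm_setIntegral_le_of_norm_le_const (μ := (μ : Measure X)) (s := As i)
        (measure_lt_top _ _) h17
      rw [Real.norm_eq_abs] at h18
      exact h18
    · rw [Set.not_nonempty_iff_eq_empty] at hne
      have hW00 : W i = 0 := by simp [hWdef, hne]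
      have hI0 : I i = 0 := by simp [hIdef, hne]
      simp [hW00, hI0, hδ]
  -- main sum estimate
  have hsum1 : |∑ i ∈ Finset.range (m+1), I i - ∑ i ∈ Finset.range (m+1), W i * f (c i)| ≤ δ := by
    rw [← Finset.sum_sub_distrib]
    calc |∑ i ∈ Finset.range (m+1), (I i - W i * f (c i))|
        ≤ ∑ i ∈ Finset.range (m+1), |I i - W i * f (c i)| := Finset.abs_sum_le_sum_abs _ _
      _ ≤ ∑ i ∈ Finset.range (m+1), δ * W i := Finset.sum_le_sum fun i _ => hblock i
      _ = δ * ∑ i ∈ Finset.range (m+1), W i := by rw [Finset.mul_sum]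
      _ ≤ δ * 1 := mul_le_mul_of_nonneg_left (hWle1 _) hδ
      _ = δ := mul_one δ
  have hsum2 : |∑ i : Fin (m+1), ((a i : ℝ)/((n:ℝ)+1)) * f (c i)
      - ∑ i ∈ Finset.range (m+1), W i * f (c i)| ≤ ‖f‖ * (4 * ε) := by
    rw [← Fin.sum_univ_eq_sum_range (fun i => W i * f (c i)) (m+1), ← Finset.sum_sub_distrib]
    calc |∑ i : Fin (m+1), ((a i : ℝ)/((n:ℝ)+1) * f (c i) - W i * f (c i))|
        ≤ ∑ i : Fin (m+1), |(a i : ℝ)/((n:ℝ)+1) * f (c i) - W i * f (c i)| :=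
          Finset.abs_sum_le_sum_abs _ _
      _ ≤ ∑ i : Fin (m+1), |(a i : ℝ)/((n:ℝ)+1) - W i| * ‖f‖ := by
          apply Finset.sum_le_sum
          intro i _
          rw [← sub_mul, abs_mul]
          exact mul_le_mul_of_nonneg_left (f.norm_coe_le_norm (c i)) (abs_nonneg _)
      _ = (∑ i : Fin (m+1), |(a i : ℝ)/((n:ℝ)+1) - W i|) * ‖f‖ := by rw [Finset.sum_mul]
      _ ≤ (4 * ε) * ‖f‖ :=
          mul_le_mul_of_nonneg_right hl1 (norm_nonneg f)
      _ = ‖f‖ * (4 * ε) := by ring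
  -- combine
  have hIeq : ∫ x, f x ∂(μ : Measure X)
      = ∑ i ∈ Finset.range (m+1), I i + ∑' i, I (i + (m+1)) := by
    rw [hItotal]
    linarith [hsplitI]
  rw [hIeq]
  have hfnn : (0:ℝ) ≤ ‖f‖ := norm_nonneg f
  calc |∑ i : Fin (m+1), ((a i : ℝ)/((n:ℝ)+1)) * f (c i)
      - (∑ i ∈ Finset.range (m+1), I i + ∑' i, I (i + (m+1)))|
      ≤ |∑ i : Fin (m+1), ((a i : ℝ)/((n:ℝ)+1)) * f (c i)
          - ∑ i ∈ Finset.range (m+1), W i * f (c i)|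
        + |∑ i ∈ Finset.range (m+1), I i - ∑ i ∈ Finset.range (m+1), W i * f (c i)|
        + |∑' i, I (i + (m+1))| := by
        set A := ∑ i : Fin (m+1), ((a i : ℝ)/((n:ℝ)+1)) * f (c i)
        set B := ∑ i ∈ Finset.range (m+1), W i * f (c i)
        set C := ∑ i ∈ Finset.range (m+1), I i
        set D := ∑' i, I (i + (m+1))
        calc |A - (C + D)| = |(A - B) + (-(C - B)) + (-D)| := by ring_nf
          _ ≤ |(A - B) + (-(C - B))| + |(-D)| := abs_add_le _ _
          _ ≤ |A - B| + |(-(C - B))| + |(-D)| := by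
              exact add_le_add (abs_add_le _ _) le_rfl
          _ = |A - B| + |C - B| + |D| := by rw [abs_neg, abs_neg]
      _ ≤ ‖f‖ * (4 * ε) + δ + ‖f‖ * ε := add_le_add (add_le_add hsum2 hsum1) htail
      _ ≤ δ + 5 * (‖f‖ + 1) * ε := by nlinarith

lemma dense_Phi : Dense {μ : ProbabilityMeasure X | ∃ n y, Phi n y = μ} := by
  intro μ
  rw [mem_closure_iff_seq_limit]
  have hεk : ∀ k : ℕ, (0:ℝ) < 1/((k:ℝ)+1) := fun k => by positivity
  choose n y hy using fun k : ℕ => exists_Phi_approx μ (hεk k)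
  refine ⟨fun k => Phi (n k) (y k), fun k => ⟨n k, y k, rfl⟩, ?_⟩
  rw [ProbabilityMeasure.tendsto_iff_forall_integral_tendsto]
  intro f
  rw [Metric.tendsto_atTop]
  intro r hr
  have huc := CompactSpace.uniformContinuous_of_continuous f.continuous
  rw [Metric.uniformContinuous_iff] at huc
  obtain ⟨d, hd, hfd⟩ := huc (r/3) (by positivity)
  obtain ⟨K₁, hK₁⟩ := exists_nat_gt (1/d)
  obtain ⟨K₂, hK₂⟩ := exists_nat_gt (15 * (‖f‖+1)/r)
  refine ⟨max K₁ K₂, fun k hk => ?_⟩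
  have hk₁ : K₁ ≤ k := le_trans (le_max_left _ _) hk
  have hk₂ : K₂ ≤ k := le_trans (le_max_right _ _) hk
  have hk0 : (0:ℝ) < (k:ℝ)+1 := by positivity
  have hεd : 1/((k:ℝ)+1) < d := by
    have h1 : (1:ℝ)/d < (k:ℝ)+1 := by
      calc (1:ℝ)/d < K₁ := hK₁
        _ ≤ k := by exact_mod_cast hk₁
        _ ≤ (k:ℝ)+1 := by linarith
    have h1' : 1 < ((k:ℝ)+1) * d := (div_lt_iff₀ hd).mp h1
    rw [div_lt_iff₀ hk0]
    nlinarith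
  have hmod : ∀ a b : X, dist a b ≤ 1/((k:ℝ)+1) → |f a - f b| ≤ r/3 := by
    intro a b hab
    have := hfd (lt_of_le_of_lt hab hεd)
    rw [Real.dist_eq] at this
    exact this.le
  have happrox := hy k f (r/3) (by positivity) hmod
  rw [Real.dist_eq]
  have hbound : 5 * (‖f‖+1) * (1/((k:ℝ)+1)) < r/3 := by
    have h2 : 15 * (‖f‖+1)/r < (k:ℝ)+1 := by
      calc 15 * (‖f‖+1)/r < K₂ := hK₂
        _ ≤ k := by exact_mod_cast hk₂
        _ ≤ (k:ℝ)+1 := by linarith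
    rw [div_lt_iff₀ hr] at h2
    have h3 : 15 * (‖f‖+1) < r * ((k:ℝ)+1) := by nlinarith
    have h4 : 15*(‖f‖+1)/((k:ℝ)+1) < r := (div_lt_iff₀ hk0).mpr (by linarith)
    have h5 : 5 * (‖f‖+1) * (1/((k:ℝ)+1)) = (15*(‖f‖+1)/((k:ℝ)+1))/3 := by ring
    rw [h5]
    linarith
  calc |∫ x, f x ∂(Phi (n k) (y k) : Measure X) - ∫ x, f x ∂(μ : Measure X)|
      ≤ r/3 + 5 * (‖f‖+1) * (1/((k:ℝ)+1)) := happrox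
    _ < r/3 + r/3 := by linarith
    _ < r := by linarith

end PaperAux

theorem distal_implies_dense_distal_points_on_measures {X : Type*}
    [MetricSpace X] [CompactSpace X] [MeasurableSpace X] [BorelSpace X]
    (T : X → X) (hT : Continuous T) (hTs : Surjective T)
    (h : IsDistalSystem T) :
    Dense {μ : ProbabilityMeasure X | IsDistalPoint (TM T hT) μ} := by
  have hsub : {μ : ProbabilityMeasure X | ∃ n y, Phi n y = μ}
      ⊆ {μ : ProbabilityMeasure X | IsDistalPoint (TM T hT) μ} := by
    rintro μ ⟨n, y, rfl⟩
    exact isDistalPoint_Phi T hT h n y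
  exact Dense.mono hsub dense_Phi

end Paper
end
end

section
/- If (X,T) is an M-system, then the set of minimal points of the induced system (M(X), T_M) is dense in M(X). -/
open MeasureTheory Topology Set Function TopologicalSpace

noncomputable section

namespace Paper

open scoped ENNReal NNReal

section Aux

open Filter Metric

set_option linter.unusedSectionVars false

lemma isClosed_orbitClosure {α : Type*} [TopologicalSpace α] (T : α → α) (x : α) :
    IsClosed (orbitClosure T x) := isClosed_closure

lemma mem_orbitClosure_self {α : Type*} [TopologicalSpace α] (T : α → α) (x : α) :
    x ∈ orbitClosure T x :=
  subset_closure ⟨0, rfl⟩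

lemma orbitClosure_nonempty {α : Type*} [TopologicalSpace α] (T : α → α) (x : α) :
    (orbitClosure T x).Nonempty := ⟨x, mem_orbitClosure_self T x⟩

lemma orbitClosure_mapsTo {α : Type*} [TopologicalSpace α] {T : α → α} (hT : Continuous T)
    (x : α) : MapsTo T (orbitClosure T x) (orbitClosure T x) := by
  intro z hz
  have h1 : T '' orbitClosure T x ⊆ closure (T '' range fun n : ℕ => T^[n] x) :=
    image_closure_subset_closure_image hT
  have h2 : (T '' range fun n : ℕ => T^[n] x) ⊆ range fun n : ℕ => T^[n] x := by
    rintro _ ⟨_, ⟨n, rfl⟩, rfl⟩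
    refine ⟨n + 1, ?_⟩
    simp [Function.iterate_succ_apply' T n x]
  exact closure_mono h2 (h1 ⟨z, hz, rfl⟩)

lemma minimalPoint_image {α β : Type*} [TopologicalSpace α] [TopologicalSpace β]
    [CompactSpace α] [T2Space β] {T : α → α} {S : β → β} {π : α → β}
    (hTc : Continuous T) (hπ : Continuous π) (hcomm : ∀ a, π (T a) = S (π a))
    {x : α} (hx : IsMinimalPoint T x) : IsMinimalPoint S (π x) := by
  have hsemi : Function.Semiconj π T S := hcomm
  have horb : orbitClosure S (π x) = π '' orbitClosure T x := by
    have hrange : (range fun n : ℕ => S^[n] (π x)) = π '' range fun n : ℕ => T^[n] x := by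
      rw [← range_comp]
      refine congrArg _ (funext fun n => ?_)
      exact ((hsemi.iterate_right n) x).symm
    have hclosed : IsClosed (π '' orbitClosure T x) :=
      ((isClosed_orbitClosure T x).isCompact.image hπ).isClosed
    apply Subset.antisymm
    · rw [orbitClosure, hrange]
      exact closure_minimal (image_mono subset_closure) hclosed
    · show π '' closure _ ⊆ orbitClosure S (π x)
      refine (image_closure_subset_closure_image hπ).trans ?_
      rw [orbitClosure, hrange]
  intro Y hYne hYcl hYmap hYsub
  rw [horb] at hYsub ⊢
  set C := orbitClosure T x with hC
  have hZ : π ⁻¹' Y ∩ C = C := by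
    apply hx
    · obtain ⟨y, hy⟩ := hYne
      obtain ⟨a, ha, rfl⟩ := hYsub hy
      exact ⟨a, hy, ha⟩
    · exact (hYcl.preimage hπ).inter (isClosed_orbitClosure T x)
    · intro z ⟨hz1, hz2⟩
      refine ⟨?_, orbitClosure_mapsTo hTc x hz2⟩
      show π (T z) ∈ Y
      rw [hcomm z]
      exact hYmap hz1
    · exact inter_subset_right
  apply Subset.antisymm hYsub
  rintro _ ⟨a, ha, rfl⟩
  rw [← hZ] at ha
  exact ha.1

variable {X : Type*} [MetricSpace X] [CompactSpace X] [MeasurableSpace X] [BorelSpace X]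

/-- The product map on `Fin n → X`. -/
def piMap (T : X → X) (n : ℕ) : (Fin n → X) → (Fin n → X) := fun v i => T (v i)

lemma exists_window (T : X → X) (hT : Continuous T) (hTrans : IsTransitive T) [Nonempty X] :
    ∀ (n : ℕ) (U : Fin n → Set X), (∀ i, IsOpen (U i)) → (∀ i, (U i).Nonempty) →
      ∃ (W : Set X) (k : Fin n → ℕ), IsOpen W ∧ W.Nonempty ∧
        ∀ x ∈ W, ∀ i, T^[k i] x ∈ U i := by
  intro n
  induction n with
  | zero =>
    intro U _ _
    exact ⟨univ, fun i => i.elim0, isOpen_univ, univ_nonempty, fun _ _ i => i.elim0⟩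
  | succ n ih =>
    intro U hUo hUne
    obtain ⟨W', k', hW'o, hW'ne, hW'⟩ := ih (fun i => U i.succ) (fun i => hUo i.succ)
      (fun i => hUne i.succ)
    obtain ⟨m, hm⟩ := (hTrans W' (U 0) hW'o hW'ne (hUo 0) (hUne 0)).nonempty
    refine ⟨W' ∩ T^[m] ⁻¹' U 0, Fin.cases m k', hW'o.inter ((hUo 0).preimage (hT.iterate m)),
      hm, ?_⟩
    intro x hx i
    refine Fin.cases ?_ (fun j => ?_) i
    · simpa using hx.2
    · simpa using hW' x hx.1 j

lemma piMap_continuous (T : X → X) (hT : Continuous T) (n : ℕ) :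
    Continuous (piMap T n) :=
  continuous_pi fun i => hT.comp (continuous_apply i)

lemma isMinimalPoint_iterates (T : X → X) (hT : Continuous T) {x : X}
    (hx : IsMinimalPoint T x) (n : ℕ) (k : Fin n → ℕ) :
    IsMinimalPoint (piMap T n) (fun i => T^[k i] x) := by
  have := minimalPoint_image (T := T) (S := piMap T n) (π := fun y i => T^[k i] y)
    hT (continuous_pi fun i => hT.iterate (k i)) (fun a => ?_) hx
  · exact this
  · funext i
    simp [piMap, ← Function.iterate_succ_apply, Function.iterate_succ_apply']

lemma dense_minimalPoints_pi (T : X → X) (hT : Continuous T) (hTrans : IsTransitive T)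
    (hDense : Dense {x : X | IsMinimalPoint T x}) [Nonempty X] (n : ℕ) :
    Dense {v : Fin n → X | IsMinimalPoint (piMap T n) v} := by
  rw [dense_iff_inter_open]
  intro W hWo hWne
  obtain ⟨w, hw⟩ := hWne
  obtain ⟨I, u, hu, hIu⟩ := isOpen_pi_iff.mp hWo w hw
  set U : Fin n → Set X := fun i => if i ∈ I then u i else univ with hU
  obtain ⟨W', k, hW'o, hW'ne, hW'⟩ := exists_window T hT hTrans n U
    (fun i => by by_cases h : i ∈ I <;> simp [hU, h, (hu i · |>.1)])
    (fun i => by by_cases h : i ∈ I <;> simp [hU, h]; exact ⟨w i, (hu i h).2⟩)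
  obtain ⟨x, hxW', hxmin⟩ := hDense.inter_open_nonempty W' hW'o hW'ne
  refine ⟨fun i => T^[k i] x, ?_, isMinimalPoint_iterates T hT hxmin n k⟩
  apply hIu
  intro i hi
  have := hW' x hxW' i
  have h2 : U i = u i := by rw [hU]; exact if_pos hi
  rwa [h2] at this

/-- Empirical distribution of `n+1` points. -/
def empDist (n : ℕ) (v : Fin (n + 1) → X) : ProbabilityMeasure X :=
  ⟨(((n : ℝ≥0∞) + 1))⁻¹ • ∑ i, Measure.dirac (v i), by
    constructor
    simp [Measure.smul_apply, Measure.finset_sum_apply, smul_eq_mul]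
    rw [ENNReal.inv_mul_cancel] <;> simp⟩

lemma lintegral_empDist (n : ℕ) (v : Fin (n + 1) → X) (f : X → ℝ≥0∞) (hf : Measurable f) :
    ∫⁻ x, f x ∂(empDist n v : Measure X) = ((n : ℝ≥0∞) + 1)⁻¹ * ∑ i, f (v i) := by
  show ∫⁻ x, f x ∂((((n : ℝ≥0∞) + 1))⁻¹ • ∑ i, Measure.dirac (v i)) = _
  rw [lintegral_smul_measure, lintegral_finset_sum_measure]
  simp [lintegral_dirac' _ hf]

lemma continuous_empDist (n : ℕ) : Continuous (empDist (X := X) n) := by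
  rw [continuous_iff_continuousAt]
  intro v
  rw [ContinuousAt, ProbabilityMeasure.tendsto_iff_forall_lintegral_tendsto]
  intro f
  have hf : Measurable fun x => (f x : ℝ≥0∞) :=
    (ENNReal.continuous_coe.comp f.continuous).measurable
  simp_rw [lintegral_empDist _ _ _ hf]
  refine ENNReal.Tendsto.const_mul ?_ (Or.inr (by simp))
  apply Continuous.tendsto
  exact continuous_finset_sum _ fun i _ =>
    ENNReal.continuous_coe.comp (f.continuous.comp (continuous_apply i))

lemma empDist_comp (T : X → X) (hT : Continuous T) (n : ℕ) (v : Fin (n + 1) → X) :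
    TM T hT (empDist n v) = empDist n (fun i => T (v i)) := by
  apply ProbabilityMeasure.toMeasure_injective
  show (empDist n v : Measure X).map T = _
  apply Measure.ext
  intro s hs
  rw [Measure.map_apply hT.measurable hs]
  show ((((n : ℝ≥0∞) + 1))⁻¹ • ∑ i, Measure.dirac (v i)) _ =
    ((((n : ℝ≥0∞) + 1))⁻¹ • ∑ i, Measure.dirac (T (v i))) s
  simp only [Measure.smul_apply, Measure.finset_sum_apply, Measure.dirac_apply, smul_eq_mul]
  refine congrArg _ (Finset.sum_congr rfl fun i _ => ?_)
  by_cases h : T (v i) ∈ s <;> simp [indicator, h, Set.mem_preimage]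

lemma floor_div_tendsto (a : ℝ) (ha : 0 ≤ a) :
    Tendsto (fun N : ℕ => (⌊((N : ℝ) + 1) * a⌋₊ : ℝ) / ((N : ℝ) + 1)) atTop (𝓝 a) := by
  have hpos : ∀ N : ℕ, (0 : ℝ) < (N : ℝ) + 1 := fun N => by positivity
  have hub : ∀ N : ℕ, (⌊((N : ℝ) + 1) * a⌋₊ : ℝ) / ((N : ℝ) + 1) ≤ a := by
    intro N
    rw [div_le_iff₀ (hpos N)]
    calc (⌊((N : ℝ) + 1) * a⌋₊ : ℝ) ≤ ((N : ℝ) + 1) * a := Nat.floor_le (by positivity)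
    _ = a * ((N : ℝ) + 1) := mul_comm _ _
  have hlb : ∀ N : ℕ, a - 1 / ((N : ℝ) + 1) ≤ (⌊((N : ℝ) + 1) * a⌋₊ : ℝ) / ((N : ℝ) + 1) := by
    intro N
    rw [sub_le_iff_le_add, ← add_div, le_div_iff₀ (hpos N)]
    have := Nat.sub_one_lt_floor (((N : ℝ) + 1) * a)
    nlinarith [this]
  have hlow : Tendsto (fun N : ℕ => a - 1 / ((N : ℝ) + 1)) atTop (𝓝 a) := by
    have h0 : Tendsto (fun N : ℕ => 1 / ((N : ℝ) + 1)) atTop (𝓝 0) :=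
      tendsto_one_div_add_atTop_nhds_zero_nat
    simpa using tendsto_const_nhds.sub h0
  exact tendsto_of_tendsto_of_tendsto_of_le_of_le hlow tendsto_const_nhds hlb hub

/-- Multiplicity: listing points with multiplicities. -/
lemma exists_multiplicity_fun {X : Type*} (r N : ℕ) (c : Fin r → X) (k : Fin r → ℕ)
    (hk : ∑ i, k i = N + 1) :
    ∃ v : Fin (N + 1) → X, ∀ (M : Type) [AddCommMonoid M] (g : X → M),
      ∑ j, g (v j) = ∑ i, k i • g (c i) := by
  have hcard : Fintype.card (Σ i : Fin r, Fin (k i)) = Fintype.card (Fin (N + 1)) := by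
    simp [Fintype.card_sigma, hk]
  obtain ⟨e⟩ : Nonempty (Fin (N + 1) ≃ Σ i : Fin r, Fin (k i)) :=
    ⟨(Fintype.equivOfCardEq hcard).symm⟩
  refine ⟨fun j => c (e j).1, fun M _ g => ?_⟩
  rw [Fintype.sum_equiv e _ (fun σ => g (c σ.1)) (fun j => rfl)]
  rw [← Finset.univ_sigma_univ, Finset.sum_sigma]
  simp [Finset.sum_const]

lemma exists_rounding (r : ℕ) (w : Fin (r + 1) → ℝ≥0∞) (hw : ∑ i, w i = 1) :
    ∃ k : ℕ → Fin (r + 1) → ℕ, (∀ N, ∑ i, k N i = N + 1) ∧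
      ∀ i, Tendsto (fun N : ℕ => ((k N i : ℝ≥0∞)) * (((N : ℝ≥0∞)) + 1)⁻¹) atTop (𝓝 (w i)) := by
  have hwt : ∀ i, w i ≠ ∞ := by
    intro i
    have h1 : w i ≤ 1 := hw ▸ Finset.single_le_sum (fun j _ => (zero_le : 0 ≤ w j)) (Finset.mem_univ i)
    exact (h1.trans_lt ENNReal.one_lt_top).ne
  set t : Fin (r + 1) → ℝ := fun i => (w i).toReal with ht
  have ht0 : ∀ i, 0 ≤ t i := fun i => ENNReal.toReal_nonneg
  have htsum : ∑ i, t i = 1 := by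
    rw [ht, ← ENNReal.toReal_sum (fun i _ => hwt i), hw, ENNReal.toReal_one]
  have htsucc : ∑ i : Fin r, t i.succ ≤ 1 := by
    rw [← htsum, Fin.sum_univ_succ]
    have := ht0 0
    linarith [Finset.sum_le_sum (fun (i : Fin r) (_ : i ∈ Finset.univ) => le_refl (t i.succ))]
  -- the floor counts
  set s : ℕ → ℕ := fun N => ∑ i : Fin r, ⌊((N : ℝ) + 1) * t i.succ⌋₊ with hs
  have hsle : ∀ N, s N ≤ N + 1 := by
    intro N
    have hcast : (s N : ℝ) ≤ (N : ℝ) + 1 := by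
      rw [hs]
      push_cast
      calc ∑ i : Fin r, (⌊((N : ℝ) + 1) * t i.succ⌋₊ : ℝ)
          ≤ ∑ i : Fin r, ((N : ℝ) + 1) * t i.succ :=
            Finset.sum_le_sum fun i _ => Nat.floor_le (by positivity)
        _ = ((N : ℝ) + 1) * ∑ i : Fin r, t i.succ := by rw [Finset.mul_sum]
        _ ≤ ((N : ℝ) + 1) * 1 := by
            apply mul_le_mul_of_nonneg_left htsucc (by positivity)
        _ = (N : ℝ) + 1 := mul_one _
    exact_mod_cast hcast
  set k : ℕ → Fin (r + 1) → ℕ :=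
    fun N => Fin.cases (N + 1 - s N) (fun i => ⌊((N : ℝ) + 1) * t i.succ⌋₊) with hkdef
  have hk0 : ∀ N, k N 0 = N + 1 - s N := fun N => rfl
  have hksucc : ∀ N (i : Fin r), k N i.succ = ⌊((N : ℝ) + 1) * t i.succ⌋₊ := fun N i => by
    simp [hkdef]
  have hksum : ∀ N, ∑ i, k N i = N + 1 := by
    intro N
    rw [Fin.sum_univ_succ, hk0]
    have : ∑ i : Fin r, k N i.succ = s N := by
      rw [hs]
      exact Finset.sum_congr rfl fun i _ => hksucc N i
    rw [this, Nat.sub_add_cancel (hsle N)]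
  refine ⟨k, hksum, ?_⟩
  -- real-valued limits
  have hreal : ∀ i, Tendsto (fun N : ℕ => (k N i : ℝ) / ((N : ℝ) + 1)) atTop (𝓝 (t i)) := by
    intro i
    refine Fin.cases ?_ (fun j => ?_) i
    · -- coordinate 0
      have hrw : ∀ N : ℕ, (k N 0 : ℝ) / ((N : ℝ) + 1)
          = 1 - ∑ j : Fin r, (⌊((N : ℝ) + 1) * t j.succ⌋₊ : ℝ) / ((N : ℝ) + 1) := by
        intro N
        rw [hk0, Nat.cast_sub (hsle N)]
        push_cast
        rw [hs]
        push_cast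
        rw [sub_div, Finset.sum_div]
        congr 1
        field_simp
      simp only [hrw]
      have hsumlim : Tendsto (fun N : ℕ =>
          ∑ j : Fin r, (⌊((N : ℝ) + 1) * t j.succ⌋₊ : ℝ) / ((N : ℝ) + 1)) atTop
          (𝓝 (∑ j : Fin r, t j.succ)) :=
        tendsto_finset_sum _ fun j _ => floor_div_tendsto (t j.succ) (ht0 j.succ)
      have h0 : t 0 = 1 - ∑ j : Fin r, t j.succ := by
        rw [← htsum, Fin.sum_univ_succ]; ring
      rw [h0]
      exact tendsto_const_nhds.sub hsumlim
    · -- successor coordinates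
      have hrw : ∀ N : ℕ, (k N j.succ : ℝ) / ((N : ℝ) + 1)
          = (⌊((N : ℝ) + 1) * t j.succ⌋₊ : ℝ) / ((N : ℝ) + 1) := fun N => by
        rw [hksucc]
      simp only [hrw]
      exact floor_div_tendsto (t j.succ) (ht0 j.succ)
  -- transfer to ℝ≥0∞
  intro i
  have hofreal : ∀ N : ℕ, (k N i : ℝ≥0∞) * (((N : ℝ≥0∞)) + 1)⁻¹
      = ENNReal.ofReal ((k N i : ℝ) / ((N : ℝ) + 1)) := by
    intro N
    rw [ENNReal.ofReal_div_of_pos (by positivity), ENNReal.ofReal_natCast]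
    have : ENNReal.ofReal ((N : ℝ) + 1) = ((N : ℝ≥0∞)) + 1 := by
      rw [show ((N : ℝ) + 1) = (((N + 1 : ℕ) : ℝ)) by push_cast; ring, ENNReal.ofReal_natCast]
      push_cast
      ring
    rw [this, div_eq_mul_inv]
  simp only [hofreal]
  have hwi : w i = ENNReal.ofReal (t i) := (ENNReal.ofReal_toReal (hwt i)).symm
  rw [hwi]
  exact (ENNReal.continuous_ofReal.tendsto (t i)).comp (hreal i)

/-- Weighted Dirac combination as a probability measure. -/
def wDirac (r : ℕ) (c : Fin r → X) (w : Fin r → ℝ≥0∞) (hw : ∑ i, w i = 1) :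
    ProbabilityMeasure X :=
  ⟨∑ i, w i • Measure.dirac (c i), by
    constructor
    simp [Measure.finset_sum_apply, Measure.smul_apply, smul_eq_mul, hw]⟩

lemma lintegral_wDirac (r : ℕ) (c : Fin r → X) (w : Fin r → ℝ≥0∞) (hw : ∑ i, w i = 1)
    (f : X → ℝ≥0∞) (hf : Measurable f) :
    ∫⁻ x, f x ∂(wDirac r c w hw : Measure X) = ∑ i, w i * f (c i) := by
  show ∫⁻ x, f x ∂(∑ i, w i • Measure.dirac (c i)) = _
  rw [lintegral_finset_sum_measure]
  refine Finset.sum_congr rfl fun i _ => ?_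
  rw [lintegral_smul_measure, lintegral_dirac' _ hf, smul_eq_mul]

/-- Weighted Dirac combinations are limits of uniform empirical distributions. -/
lemma wDirac_tendsto (r : ℕ) (c : Fin (r + 1) → X) (w : Fin (r + 1) → ℝ≥0∞)
    (hw : ∑ i, w i = 1) :
    ∃ vs : (N : ℕ) → (Fin (N + 1) → X),
      Tendsto (fun N => empDist N (vs N)) atTop (𝓝 (wDirac (r + 1) c w hw)) := by
  obtain ⟨k, hksum, hklim⟩ := exists_rounding r w hw
  choose v hv using fun N => exists_multiplicity_fun (r + 1) N c (k N) (hksum N)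
  refine ⟨v, ?_⟩
  rw [ProbabilityMeasure.tendsto_iff_forall_lintegral_tendsto]
  intro f
  have hf : Measurable fun x => (f x : ℝ≥0∞) :=
    (ENNReal.continuous_coe.comp f.continuous).measurable
  have hrw : ∀ N, ∫⁻ x, (f x : ℝ≥0∞) ∂(empDist N (v N) : Measure X)
      = ∑ i, ((k N i : ℝ≥0∞) * ((N : ℝ≥0∞) + 1)⁻¹) * (f (c i) : ℝ≥0∞) := by
    intro N
    rw [lintegral_empDist N (v N) _ hf, hv N ℝ≥0∞ (fun x => (f x : ℝ≥0∞)), Finset.mul_sum]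
    refine Finset.sum_congr rfl fun i _ => ?_
    rw [nsmul_eq_mul]
    ring
  simp only [hrw, lintegral_wDirac (r + 1) c w hw _ hf]
  refine tendsto_finset_sum _ fun i _ => ?_
  exact ENNReal.Tendsto.mul_const (hklim i) (Or.inr ENNReal.coe_ne_top)

lemma exists_partition [Nonempty X] (δ : ℝ) (hδ : 0 < δ) :
    ∃ (r : ℕ) (c : Fin (r + 1) → X) (A : Fin (r + 1) → Set X),
      (∀ i, MeasurableSet (A i)) ∧ (∀ i, A i ⊆ ball (c i) δ) ∧
      Pairwise (Disjoint on A) ∧ (⋃ i, A i) = univ := by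
  obtain ⟨t, -, htfin, htcov⟩ := finite_cover_balls_of_compact (isCompact_univ (X := X)) hδ
  obtain ⟨n, e, hrange⟩ := htfin.fin_embedding
  have hn : n ≠ 0 := by
    rintro rfl
    obtain ⟨y, hy, -⟩ := mem_iUnion₂.mp (htcov (mem_univ (Classical.arbitrary X)))
    rw [← hrange] at hy
    obtain ⟨i, -⟩ := hy
    exact i.elim0
  obtain ⟨r, rfl⟩ := Nat.exists_eq_succ_of_ne_zero hn
  set c : Fin (r + 1) → X := ⇑e with hc
  set A : Fin (r + 1) → Set X :=
    fun i => ball (c i) δ \ ⋃ (j : Fin (r + 1)) (_ : j < i), ball (c j) δ with hA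
  have hmeas : ∀ i, MeasurableSet (A i) := fun i =>
    measurableSet_ball.diff (MeasurableSet.iUnion fun j => MeasurableSet.iUnion
      fun _ => measurableSet_ball)
  have hsub : ∀ i, A i ⊆ ball (c i) δ := fun i => diff_subset
  have haux : ∀ i j : Fin (r + 1), i < j → Disjoint (A i) (A j) := by
    intro i j hij
    rw [Set.disjoint_left]
    intro x hxi hxj
    exact hxj.2 (mem_iUnion₂.mpr ⟨i, hij, hsub i hxi⟩)
  refine ⟨r, c, A, hmeas, hsub, ?_, ?_⟩
  · intro i j hij
    rcases hij.lt_or_gt with h | h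
    · exact haux i j h
    · exact (haux j i h).symm
  · apply eq_univ_of_forall
    intro x
    have hx : ∃ i : Fin (r + 1), x ∈ ball (c i) δ := by
      obtain ⟨y, hy, hxy⟩ := mem_iUnion₂.mp (htcov (mem_univ x))
      rw [← hrange] at hy
      obtain ⟨i, rfl⟩ := hy
      exact ⟨i, hxy⟩
    have hSfin : ({i : Fin (r + 1) | x ∈ ball (c i) δ}).Finite := Set.toFinite _
    obtain ⟨i₀, hi₀, hmin⟩ := Set.exists_min_image _ id hSfin hx
    refine mem_iUnion.mpr ⟨i₀, hi₀, ?_⟩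
    intro hmem
    obtain ⟨j, hj⟩ := mem_iUnion.mp hmem
    obtain ⟨hjlt, hjball⟩ := mem_iUnion.mp hj
    exact absurd (hmin j hjball) (not_le.mpr hjlt)

/-- Every probability measure is the limit of a sequence of weighted Dirac combinations. -/
lemma exists_wDirac_tendsto [Nonempty X] (μ : ProbabilityMeasure X) :
    ∃ ν : ℕ → ProbabilityMeasure X,
      (∀ m, ∃ (r : ℕ) (c : Fin (r + 1) → X) (w : Fin (r + 1) → ℝ≥0∞) (hw : ∑ i, w i = 1),
        ν m = wDirac (r + 1) c w hw) ∧ Tendsto ν atTop (𝓝 μ) := by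
  have hδ : ∀ m : ℕ, (0 : ℝ) < 1 / ((m : ℝ) + 1) := fun m => by positivity
  choose r c A hmeas hsub hdisj hcov using fun m : ℕ => exists_partition (X := X) _ (hδ m)
  set w : (m : ℕ) → Fin (r m + 1) → ℝ≥0∞ := fun m i => (μ : Measure X) (A m i) with hwdef
  have hw : ∀ m, ∑ i, w m i = 1 := by
    intro m
    rw [hwdef]
    have := measure_iUnion (μ := (μ : Measure X)) (hdisj m) (hmeas m)
    rw [hcov m] at this
    simp only [measure_univ] at this
    rw [← tsum_fintype (L := SummationFilter.unconditional _)]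
    exact this.symm
  refine ⟨fun m => wDirac (r m + 1) (c m) (w m) (hw m), fun m => ⟨r m, c m, w m, hw m, rfl⟩, ?_⟩
  rw [ProbabilityMeasure.tendsto_iff_forall_lintegral_tendsto]
  intro f
  have hf : Measurable fun x => (f x : ℝ≥0∞) :=
    (ENNReal.continuous_coe.comp f.continuous).measurable
  set F : X → ℝ≥0∞ := fun x => (f x : ℝ≥0∞) with hF
  set I : ℝ≥0∞ := ∫⁻ x, F x ∂(μ : Measure X) with hI
  have hItop : I ≠ ∞ := (f.lintegral_lt_top_of_nnreal (μ : Measure X)).ne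
  -- partition splitting of lintegrals
  have hpart : ∀ (m : ℕ) (g : X → ℝ≥0∞), Measurable g →
      ∑ i, ∫⁻ x in A m i, g x ∂(μ : Measure X) = ∫⁻ x, g x ∂(μ : Measure X) := by
    intro m g hg
    rw [← tsum_fintype (L := SummationFilter.unconditional _), ← lintegral_iUnion (hmeas m) (hdisj m) g, hcov m, setLIntegral_univ]
  -- the sum expression
  have hLrw : ∀ m, ∫⁻ x, F x ∂(wDirac (r m + 1) (c m) (w m) (hw m) : Measure X)
      = ∑ i, w m i * F (c m i) := fun m => lintegral_wDirac _ _ _ _ F hf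
  simp only [hLrw]
  rw [ENNReal.tendsto_nhds hItop]
  intro ε hε
  obtain ⟨ε', hε'pos, hε'le⟩ : ∃ ε' : ℝ≥0, 0 < ε' ∧ (ε' : ℝ≥0∞) ≤ ε := by
    rcases eq_or_ne ε ∞ with rfl | hne
    · exact ⟨1, one_pos, le_top⟩
    · exact ⟨ε.toNNReal, ENNReal.toNNReal_pos hε.ne' hne,
        (ENNReal.coe_toNNReal hne).le⟩
  -- uniform continuity
  obtain ⟨δ, hδpos, hδprop⟩ := Metric.uniformContinuous_iff.mp
    (CompactSpace.uniformContinuous_of_continuous f.continuous) ε' (by exact_mod_cast hε'pos)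
  have hclose : ∀ a b : X, dist a b < δ → (F a ≤ F b + ε' ∧ F b ≤ F a + ε') := by
    intro a b hab
    have h1 := hδprop hab
    rw [NNReal.dist_eq] at h1
    have h2 : |(f a : ℝ) - (f b : ℝ)| < ε' := h1
    constructor
    · have : (f a : ℝ) ≤ (f b : ℝ) + ε' := by
        cases abs_lt.mp h2; linarith
      have hle : f a ≤ f b + ε' := by exact_mod_cast this
      show ((f a : ℝ≥0) : ℝ≥0∞) ≤ ((f b : ℝ≥0) : ℝ≥0∞) + (ε' : ℝ≥0∞)
      rw [← ENNReal.coe_add]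
      exact ENNReal.coe_le_coe.mpr hle
    · have : (f b : ℝ) ≤ (f a : ℝ) + ε' := by
        cases abs_lt.mp h2; linarith
      have hle : f b ≤ f a + ε' := by exact_mod_cast this
      show ((f b : ℝ≥0) : ℝ≥0∞) ≤ ((f a : ℝ≥0) : ℝ≥0∞) + (ε' : ℝ≥0∞)
      rw [← ENNReal.coe_add]
      exact ENNReal.coe_le_coe.mpr hle
  -- eventually the mesh is below δ
  have hev : ∀ᶠ m : ℕ in atTop, 1 / ((m : ℝ) + 1) < δ :=
    tendsto_one_div_add_atTop_nhds_zero_nat.eventually (gt_mem_nhds hδpos)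
  filter_upwards [hev] with m hm
  constructor
  · -- lower bound : I - ε ≤ ∑
    have key : I ≤ (∑ i, w m i * F (c m i)) + ε' := by
      have hub : ∀ i, ∫⁻ x in A m i, F x ∂(μ : Measure X)
          ≤ w m i * F (c m i) + ε' * w m i := by
        intro i
        calc ∫⁻ x in A m i, F x ∂(μ : Measure X)
            ≤ ∫⁻ x in A m i, (F (c m i) + ε') ∂(μ : Measure X) := by
              apply setLIntegral_mono' (hmeas m i)
              intro x hx
              have hdist : dist (c m i) x < δ :=
                lt_trans (by simpa [dist_comm] using hsub m i hx) hm
              exact (hclose (c m i) x hdist).2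
          _ = (F (c m i) + ε') * (μ : Measure X) (A m i) := setLIntegral_const _ _
          _ = w m i * F (c m i) + ε' * w m i := by rw [hwdef]; ring
      calc I = ∑ i, ∫⁻ x in A m i, F x ∂(μ : Measure X) := (hpart m F hf).symm
        _ ≤ ∑ i, (w m i * F (c m i) + ε' * w m i) := Finset.sum_le_sum fun i _ => hub i
        _ = (∑ i, w m i * F (c m i)) + ε' * ∑ i, w m i := by
            rw [Finset.sum_add_distrib, Finset.mul_sum]
        _ = (∑ i, w m i * F (c m i)) + ε' := by rw [hw m, mul_one]
    calc I - ε ≤ I - ε' := tsub_le_tsub_left hε'le I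
      _ ≤ ∑ i, w m i * F (c m i) := tsub_le_iff_right.mpr key
  · -- upper bound
    have key : (∑ i, w m i * F (c m i)) ≤ I + ε' := by
      have hub : ∀ i, w m i * F (c m i)
          ≤ ∫⁻ x in A m i, F x ∂(μ : Measure X) + ε' * w m i := by
        intro i
        calc w m i * F (c m i) = (F (c m i)) * (μ : Measure X) (A m i) := by
              rw [hwdef]; ring
          _ = ∫⁻ _ in A m i, F (c m i) ∂(μ : Measure X) := (setLIntegral_const _ _).symm
          _ ≤ ∫⁻ x in A m i, (F x + ε') ∂(μ : Measure X) := by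
              apply setLIntegral_mono' (hmeas m i)
              intro x hx
              have hdist : dist (c m i) x < δ :=
                lt_trans (by simpa [dist_comm] using hsub m i hx) hm
              exact (hclose (c m i) x hdist).1
          _ = ∫⁻ x in A m i, F x ∂(μ : Measure X) + ε' * (μ : Measure X) (A m i) := by
              rw [lintegral_add_right _ measurable_const, setLIntegral_const, mul_comm]
          _ = ∫⁻ x in A m i, F x ∂(μ : Measure X) + ε' * w m i := by rw [hwdef]
      calc (∑ i, w m i * F (c m i))
          ≤ ∑ i, (∫⁻ x in A m i, F x ∂(μ : Measure X) + ε' * w m i) :=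
            Finset.sum_le_sum fun i _ => hub i
        _ = I + ε' * ∑ i, w m i := by
            rw [Finset.sum_add_distrib, hpart m F hf, Finset.mul_sum]
        _ = I + ε' := by rw [hw m, mul_one]
    exact key.trans (add_le_add_right hε'le I)

end Aux

theorem Msystem_implies_dense_minimal_points_on_measures {X : Type*}
    [MetricSpace X] [CompactSpace X] [MeasurableSpace X] [BorelSpace X]
    (T : X → X) (hT : Continuous T) (hTs : Surjective T)
    (h : IsMSystem T) :
    Dense {μ : ProbabilityMeasure X | IsMinimalPoint (TM T hT) μ} := by
  rcases isEmpty_or_nonempty X with hXe | hX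
  · intro μ
    exfalso
    have h1 : (μ : Measure X) univ = 1 := measure_univ
    rw [Set.univ_eq_empty_iff.mpr hXe, measure_empty] at h1
    exact zero_ne_one h1
  · haveI : Nonempty X := hX
    intro μ
    set S := {ν : ProbabilityMeasure X | IsMinimalPoint (TM T hT) ν} with hS
    have hemp : ∀ (n : ℕ) (v : Fin (n + 1) → X), empDist n v ∈ closure S := by
      intro n v
      have hD : Dense {u : Fin (n + 1) → X | IsMinimalPoint (piMap T (n + 1)) u} :=
        dense_minimalPoints_pi T hT h.1 h.2 (n + 1)
      have himg : empDist n '' {u : Fin (n + 1) → X | IsMinimalPoint (piMap T (n + 1)) u}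
          ⊆ S := by
        rintro _ ⟨u, hu, rfl⟩
        exact minimalPoint_image (piMap_continuous T hT (n + 1)) (continuous_empDist n)
          (fun a => (empDist_comp T hT n a).symm) hu
      have h1 : empDist n v ∈
          empDist n '' closure {u : Fin (n + 1) → X | IsMinimalPoint (piMap T (n + 1)) u} :=
        ⟨v, hD v, rfl⟩
      exact closure_mono himg (image_closure_subset_closure_image (continuous_empDist n) h1)
    have hwd : ∀ (r : ℕ) (c : Fin (r + 1) → X) (w : Fin (r + 1) → ℝ≥0∞)
        (hw : ∑ i, w i = 1), wDirac (r + 1) c w hw ∈ closure S := by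
      intro r c w hw
      obtain ⟨vs, hvs⟩ := wDirac_tendsto r c w hw
      have := mem_closure_of_tendsto hvs (Filter.Eventually.of_forall fun N => hemp N (vs N))
      rwa [closure_closure] at this
    obtain ⟨ν, hνform, hνlim⟩ := exists_wDirac_tendsto μ
    have hν : ∀ m, ν m ∈ closure S := by
      intro m
      obtain ⟨r, c, w, hw, heq⟩ := hνform m
      rw [heq]
      exact hwd r c w hw
    have := mem_closure_of_tendsto hνlim (Filter.Eventually.of_forall hν)
    rwa [closure_closure] at this

end Paper
end
end

section
/- For a topological dynamical system (X,T) the following are equivalent: (1) (X,T) is periodic; (2) (M(X), T_M) is periodic; (3) (M(X), T_M) is pointwise periodic. -/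
open MeasureTheory Topology Set Function TopologicalSpace

noncomputable section

namespace Paper

section Helpers

variable {X : Type*} [MetricSpace X] [CompactSpace X] [MeasurableSpace X] [BorelSpace X]
  (T : X → X) (hT : Continuous T)

lemma TM_iterate (n : ℕ) (μ : ProbabilityMeasure X) :
    ((TM T hT)^[n] μ).toMeasure = μ.toMeasure.map (T^[n]) := by
  induction n with
  | zero => simp [Measure.map_id]
  | succ n ih =>
    rw [Function.iterate_succ_apply', TM, ProbabilityMeasure.toMeasure_map, ih,
      Measure.map_map hT.measurable (hT.measurable.iterate n), ← Function.iterate_succ']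

lemma dirac_inj {x y : X} (h : Measure.dirac x = Measure.dirac y) : x = y := by
  by_contra hne
  have h1 := congrArg (fun μ : Measure X => μ {y}) h
  simp only [Measure.dirac_apply' _ (measurableSet_singleton y)] at h1
  rw [Set.indicator_of_notMem (by simpa using hne)] at h1
  have hy : y ∈ ({y} : Set X) := Set.mem_singleton y
  rw [Set.indicator_of_mem hy] at h1
  simp at h1

lemma mem_periodicPts_of_pointwise (h : IsPointwisePeriodic (TM T hT)) (x : X) :
    x ∈ Function.periodicPts T := by
  obtain ⟨n, hn, hfix⟩ := h ⟨Measure.dirac x, inferInstance⟩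
  have h1 := congrArg ProbabilityMeasure.toMeasure hfix
  replace h1 := (TM_iterate T hT n _).symm.trans h1
  have h2 : (Measure.dirac x).map (T^[n]) = Measure.dirac x := h1
  rw [Measure.map_dirac' (hT.measurable.iterate n)] at h2
  exact ⟨n, hn, dirac_inj h2⟩

lemma periodic_of_pointwise (h : IsPointwisePeriodic (TM T hT)) : IsPeriodicSystem T := by
  by_contra hnp
  have hper : ∀ x : X, x ∈ Function.periodicPts T := mem_periodicPts_of_pointwise T hT h
  have key : ∀ N : ℕ, ∃ x : X, N < Function.minimalPeriod T x := by
    intro N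
    have hne : ¬ (T^[Nat.factorial (N+1)] = id) := fun h' => hnp ⟨Nat.factorial (N+1), (N+1).factorial_pos, h'⟩
    obtain ⟨x, hx⟩ : ∃ x, T^[Nat.factorial (N+1)] x ≠ x := by
      by_contra hc; push_neg at hc; exact hne (funext hc)
    refine ⟨x, ?_⟩
    by_contra hle; push_neg at hle
    have hpos : 0 < Function.minimalPeriod T x :=
      Function.minimalPeriod_pos_of_mem_periodicPts (hper x)
    exact hx (Function.isPeriodicPt_iff_minimalPeriod_dvd.mpr
      (Nat.dvd_factorial hpos (le_trans hle (Nat.le_succ N))))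
  choose g hg using key
  set z : ℕ → X := fun n => Nat.rec (g 0) (fun _ y => g (Function.minimalPeriod T y)) n with hz
  set q : ℕ → ℕ := fun n => Function.minimalPeriod T (z n) with hq
  have hmono : StrictMono q := strictMono_nat_of_lt_succ (fun n => hg (q n))
  have hqinj : Function.Injective z := by
    intro a b hab
    exact hmono.injective (by rw [hq]; simp only [hab])
  set w : ℕ → ENNReal := fun n => (2 : ENNReal)⁻¹ ^ (n+1) with hw
  have hwsum : ∑' n : ℕ, w n = 1 := by
    rw [hw]
    rw [ENNReal.tsum_geometric_add_one, ENNReal.one_sub_inv_two, inv_inv]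
    exact ENNReal.inv_mul_cancel two_ne_zero ENNReal.ofNat_ne_top
  have hwpos : ∀ n, w n ≠ 0 := by
    intro n
    simp [hw]
  set ν : Measure X := Measure.sum (fun n => w n • Measure.dirac (z n)) with hν
  have hprob : IsProbabilityMeasure ν := by
    constructor
    rw [hν, Measure.sum_apply _ MeasurableSet.univ]
    simp [hwsum]
  obtain ⟨m, hm, hfix⟩ := h ⟨ν, hprob⟩
  have hmap : ν.map (T^[m]) = ν := by
    have h1 := congrArg ProbabilityMeasure.toMeasure hfix
    exact (TM_iterate T hT m _).symm.trans h1
  have hfixpt : ∀ n, T^[m] (z n) = z n := by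
    intro n
    by_contra hne
    have h1 : ν {z n} = w n := by
      rw [hν, Measure.sum_apply _ (measurableSet_singleton _)]
      rw [tsum_eq_single n ?_]
      · simp [Measure.dirac_apply_of_mem (Set.mem_singleton _)]
      · intro k hk
        have : z k ≠ z n := fun hc => hk (hqinj hc)
        have hnot : z k ∉ ({z n} : Set X) := fun hc => this hc
        simp only [Measure.smul_apply, smul_eq_mul,
          Measure.dirac_apply' _ (measurableSet_singleton _),
          Set.indicator_of_notMem hnot, mul_zero]
    have h2 : ν (T^[m] ⁻¹' {z n}) = 0 := by
      rw [hν, Measure.sum_apply _ ((hT.measurable.iterate m) (measurableSet_singleton _))]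
      have hzero : ∀ k, (w k • Measure.dirac (z k)) (T^[m] ⁻¹' {z n}) = 0 := by
        intro k
        have hzk : T^[m] (z k) ≠ z n := by
          intro heq
          rcases eq_or_ne k n with rfl | hk
          · exact hne heq
          · have h3 := Function.minimalPeriod_apply_iterate (hper (z k)) m
            rw [heq] at h3
            exact hk (hmono.injective h3.symm)
        have : z k ∉ T^[m] ⁻¹' {z n} := by simpa using hzk
        simp [Measure.dirac_apply' _ ((hT.measurable.iterate m) (measurableSet_singleton _)),
          Set.indicator_of_notMem this]
      simp only [hzero, tsum_zero]
    have h4 : ν {z n} = 0 := by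
      conv_lhs => rw [← hmap]
      rw [Measure.map_apply (hT.measurable.iterate m) (measurableSet_singleton _)]
      exact h2
    exact hwpos n (h1.symm.trans h4)
  have hle : ∀ n, q n ≤ m := fun n =>
    Nat.le_of_dvd hm (Function.isPeriodicPt_iff_minimalPeriod_dvd.mp (hfixpt n))
  have := hmono.le_apply (x := m + 1)
  have := hle (m + 1)
  omega

lemma periodic_of_periodic_base (hp : IsPeriodicSystem T) : IsPeriodicSystem (TM T hT) := by
  obtain ⟨m, hm, hid⟩ := hp
  refine ⟨m, hm, funext fun μ => ?_⟩
  apply ProbabilityMeasure.toMeasure_injective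
  rw [TM_iterate, hid, Measure.map_id]
  rfl

end Helpers

theorem periodic_iff_measures_periodic {X : Type*}
    [MetricSpace X] [CompactSpace X] [MeasurableSpace X] [BorelSpace X]
    (T : X → X) (hT : Continuous T) (hTs : Surjective T) :
    (IsPeriodicSystem T ↔ IsPeriodicSystem (TM T hT)) ∧
    (IsPeriodicSystem (TM T hT) ↔ IsPointwisePeriodic (TM T hT)) := by
  have hpw : IsPeriodicSystem (TM T hT) → IsPointwisePeriodic (TM T hT) := by
    rintro ⟨m, hm, hid⟩ μ
    exact ⟨m, hm, congrFun hid μ⟩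
  refine ⟨⟨fun hp => periodic_of_periodic_base T hT hp,
    fun hp => periodic_of_pointwise T hT (hpw hp)⟩,
    ⟨hpw, fun hp => periodic_of_periodic_base T hT (periodic_of_pointwise T hT hp)⟩⟩

end Paper
end
end

section
/- Let X = {0} ∪ {1/n : n ∈ ℕ} and let T fix 0 and 1 and cyclically permute each block {1/2ⁿ, ..., 1/(2^{n+1}−1)} as T(1/2ⁿ)=1/(2ⁿ+1), ..., T(1/(2^{n+1}−1))=1/2ⁿ. Then (X,T) is pointwise periodic, but the measure μ = Σₙ (1/2ⁿ) δ_{1/2^{n−1}} is not a periodic point of the induced map T_M on M(X). -/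
open MeasureTheory Topology Set Function TopologicalSpace

noncomputable section

namespace Paper

theorem pointwise_periodic_not_measure_periodic
    (X5 : Set ℝ) (hX5 : X5 = {0} ∪ {x : ℝ | ∃ n : ℕ, 0 < n ∧ x = 1 / (n : ℝ)})
    (T : X5 → X5) (hTc : Continuous T)
    (hT0 : ∀ x : X5, (x : ℝ) = 0 → T x = x)
    (hT1 : ∀ x : X5, (x : ℝ) = 1 → T x = x)
    (hTmid : ∀ n k : ℕ, 0 < n → 2 ^ n ≤ k → k < 2 ^ (n + 1) - 1 →
      ∀ x : X5, (x : ℝ) = 1 / (k : ℝ) → (T x : ℝ) = 1 / ((k : ℝ) + 1))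
    (hTend : ∀ n : ℕ, 0 < n → ∀ x : X5, (x : ℝ) = 1 / ((2 : ℝ) ^ (n + 1) - 1) →
      (T x : ℝ) = 1 / (2 : ℝ) ^ n)
    (p : ℕ → X5) (hp : ∀ n : ℕ, (p n : ℝ) = 1 / (2 : ℝ) ^ n)
    (μ : ProbabilityMeasure X5)
    (hμ : (μ : Measure X5) =
      Measure.sum (fun n : ℕ => ((2 : ENNReal) ^ (n + 1))⁻¹ • Measure.dirac (p n))) :
    IsPointwisePeriodic T ∧ ¬ IsPeriodicPoint (TM T hTc) μ := by

  -- Step A: moving forward within a block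
  have stepA : ∀ m n j : ℕ, 0 < n → 2^n ≤ j → j + m < 2^(n+1) →
      ∀ x : X5, (x:ℝ) = 1/(j:ℝ) → ((T^[m] x : X5) : ℝ) = 1/((j+m : ℕ):ℝ) := by
    intro m
    induction m with
    | zero => intro n j _ _ _ x hx; simpa using hx
    | succ m ih =>
      intro n j hn hj hjm x hx
      rw [Function.iterate_succ_apply']
      have h1 : ((T^[m] x : X5) : ℝ) = 1/((j+m : ℕ):ℝ) := ih n j hn hj (by omega) x hx
      have h2 := hTmid n (j+m) hn (by omega) (by omega) (T^[m] x) h1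
      rw [h2]; push_cast; ring
  -- periodicity on a block
  have per : ∀ n j : ℕ, 0 < n → 2^n ≤ j → j < 2^(n+1) →
      ∀ x : X5, (x:ℝ) = 1/(j:ℝ) → T^[2^n] x = x := by
    intro n j hn hj hj2 x hx
    have hpow : (2:ℕ)^(n+1) = 2 * 2^n := by ring
    have hone : (1:ℕ) ≤ 2^(n+1) := Nat.one_le_two_pow
    have hy : ((T^[2^(n+1)-1-j] x : X5) : ℝ) = 1/(((2:ℕ)^(n+1)-1 : ℕ):ℝ) := by
      have h := stepA (2^(n+1)-1-j) n j hn hj (by omega) x hx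
      have hjj : j + (2^(n+1)-1-j) = 2^(n+1)-1 := by omega
      rw [hjj] at h
      exact h
    have hyR : ((T^[2^(n+1)-1-j] x : X5) : ℝ) = 1/((2:ℝ)^(n+1) - 1) := by
      rw [hy, Nat.cast_sub hone]; push_cast; ring
    have hz := hTend n hn _ hyR
    have hzn : ((T (T^[2^(n+1)-1-j] x) : X5) : ℝ) = 1/(((2:ℕ)^n : ℕ):ℝ) := by
      rw [hz]; push_cast; ring
    have hw := stepA (j - 2^n) n (2^n) hn le_rfl (by omega) _ hzn
    have hsum : 2^n + (j - 2^n) = j := by omega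
    rw [hsum] at hw
    have hcomb : T^[2^n] x = T^[j-2^n] (T (T^[2^(n+1)-1-j] x)) := by
      have h : T^[j-2^n] (T (T^[2^(n+1)-1-j] x)) = T^[(j-2^n) + (1 + (2^(n+1)-1-j))] x := by
        rw [Function.iterate_add_apply, Function.iterate_add_apply, Function.iterate_one]
      rw [h]; congr 1; omega
    apply Subtype.ext
    rw [hcomb, hw, hx]
  have part1 : IsPointwisePeriodic T := by
    intro x
    have hx : (x:ℝ) ∈ ({0} ∪ {y : ℝ | ∃ n : ℕ, 0 < n ∧ y = 1 / (n : ℝ)} : Set ℝ) := by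
      rw [← hX5]; exact x.2
    simp only [Set.mem_union, Set.mem_singleton_iff, Set.mem_setOf_eq] at hx
    rcases hx with hx0 | ⟨k, hk, hxk⟩
    · exact ⟨1, one_pos, by simpa using hT0 x hx0⟩
    · rcases eq_or_lt_of_le (show 1 ≤ k from hk) with h1 | h2
      · refine ⟨1, one_pos, ?_⟩
        simp only [Function.iterate_one]
        exact hT1 x (by rw [hxk, ← h1]; norm_num)
      · set n := Nat.log 2 k with hn
        have hn1 : 2^n ≤ k := Nat.pow_log_le_self 2 (by omega)
        have hn2 : k < 2^(n+1) := Nat.lt_pow_succ_log_self (by norm_num) k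
        have hnpos : 0 < n := by
          rcases Nat.eq_zero_or_pos n with h | h
          · rw [h] at hn2; norm_num at hn2; omega
          · exact h
        exact ⟨2^n, by positivity, per n k hnpos hn1 hn2 x hxk⟩
  have hiter : ∀ (m : ℕ) (ν : ProbabilityMeasure X5),
      (((TM T hTc)^[m] ν : ProbabilityMeasure X5) : Measure X5)
        = (ν : Measure X5).map (T^[m]) := by
    intro m
    induction m with
    | zero => intro ν; simp [Measure.map_id]
    | succ m ih =>
      intro ν
      rw [Function.iterate_succ_apply']
      have h : ((TM T hTc ((TM T hTc)^[m] ν) : ProbabilityMeasure X5) : Measure X5)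
          = (((TM T hTc)^[m] ν : ProbabilityMeasure X5) : Measure X5).map T := by
        simp [TM, ProbabilityMeasure.toMeasure_map]
      rw [h, ih, Measure.map_map hTc.measurable (hTc.measurable.iterate m),
        ← Function.iterate_succ']
  have part2 : ¬ IsPeriodicPoint (TM T hTc) μ := by
    rintro ⟨k, hk, hper⟩
    set n := k + 1 with hn
    have hkn : k < 2^n := by
      calc k < 2^k := Nat.lt_two_pow_self
      _ ≤ 2^n := Nat.pow_le_pow_right (by norm_num) (by omega)
    have hpow : (2:ℕ)^(n+1) = 2 * 2^n := by ring
    have hpn : ((p n : X5) : ℝ) = 1/(((2:ℕ)^n : ℕ):ℝ) := by rw [hp]; push_cast; ring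
    have hq : ((T^[k] (p n) : X5) : ℝ) = 1/((2^n + k : ℕ):ℝ) :=
      stepA k n (2^n) (by omega) le_rfl (by omega) (p n) hpn
    set q := T^[k] (p n) with hqdef
    have hne : ∀ m : ℕ, p m ≠ q := by
      intro m h
      have h1 : (1:ℝ)/(2:ℝ)^m = 1/((2^n + k : ℕ):ℝ) := by rw [← hp m, h, hq]
      have h2 : ((2:ℝ)^m) = ((2^n + k : ℕ):ℝ) := by
        rw [← one_div_one_div ((2:ℝ)^m), h1, one_div_one_div]
      have h4 : (2:ℕ)^m = 2^n + k := by exact_mod_cast h2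
      rcases le_or_gt m n with hmn | hmn
      · have hle2 : (2:ℕ)^m ≤ 2^n := Nat.pow_le_pow_right (by norm_num) hmn
        omega
      · have hle2 : (2:ℕ)^(n+1) ≤ 2^m := Nat.pow_le_pow_right (by norm_num) hmn
        omega
    have hμq : (μ : Measure X5) {q} = 0 := by
      rw [hμ, Measure.sum_apply _ (measurableSet_singleton q)]
      simp only [Measure.smul_apply, Measure.dirac_apply' _ (measurableSet_singleton q)]
      have hind : ∀ m : ℕ, Set.indicator {q} (1 : X5 → ENNReal) (p m) = 0 := fun m =>
        Set.indicator_of_notMem (hne m) 1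
      simp [hind]
    have hμpn : ((2:ENNReal)^(n+1))⁻¹ ≤ (μ : Measure X5) {p n} := by
      rw [hμ, Measure.sum_apply _ (measurableSet_singleton (p n))]
      refine le_trans ?_ (ENNReal.le_tsum n)
      simp [Measure.dirac_apply' _ (measurableSet_singleton (p n))]
    have hmap : (μ : Measure X5).map (T^[k]) = (μ : Measure X5) := by
      rw [← hiter k μ, hper]
    have hle : ((2:ENNReal)^(n+1))⁻¹ ≤ (μ : Measure X5) {q} := by
      rw [← hmap, Measure.map_apply (hTc.measurable.iterate k) (measurableSet_singleton q)]
      refine le_trans hμpn (measure_mono ?_)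
      intro y hy
      simp only [Set.mem_singleton_iff] at hy
      simp [hy, hqdef]
    rw [hμq] at hle
    simp at hle
  exact ⟨part1, part2⟩


end Paper
end
end

section
/- If (X,T) and (Y,S) have almost dense periodic sets, then the product system (X × Y, T × S) has almost dense periodic sets. Moreover, having almost dense periodic sets is preserved under factor maps. -/
open MeasureTheory Topology Set Function TopologicalSpace

noncomputable section

namespace Paper

lemma map_iterate_inv {α : Type*} [MeasurableSpace α] {f : α → α} (hf : Measurable f)
    {μ : Measure α} (h : μ.map f = μ) : ∀ n : ℕ, μ.map (f^[n]) = μ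
  | 0 => by simp [Measure.map_id]
  | n + 1 => by
      rw [Function.iterate_succ', ← Measure.map_map hf (hf.iterate n),
        map_iterate_inv hf h n, h]

theorem almost_dense_periodic_sets_product_and_factor {X Y : Type*}
    [MetricSpace X] [CompactSpace X] [MetricSpace Y] [CompactSpace Y]
    (T : X → X) (S : Y → Y) (hT : Continuous T) (hS : Continuous S) :
    (AlmostDensePeriodicSets T → AlmostDensePeriodicSets S →
      AlmostDensePeriodicSets (Prod.map T S)) ∧
    (∀ π : X → Y, IsFactorMap T S π → AlmostDensePeriodicSets T →
      AlmostDensePeriodicSets S) := by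
  letI : MeasurableSpace X := borel X
  haveI : BorelSpace X := ⟨rfl⟩
  letI : MeasurableSpace Y := borel Y
  haveI : BorelSpace Y := ⟨rfl⟩
  constructor
  · intro hX hY U hU hUne ε hε
    rw [show borel (X × Y) = (inferInstance : MeasurableSpace (X × Y)) from
      (Prod.borelSpace).measurable_eq.symm]
    obtain ⟨⟨x, y⟩, hxy⟩ := hUne
    obtain ⟨U₁, U₂, h₁, h₂, hx, hy, hsub⟩ := isOpen_prod_iff.mp hU x y hxy
    obtain ⟨k₁, hk₁, μ₁, hμ₁p, hμ₁i, hμ₁⟩ := hX U₁ h₁ ⟨x, hx⟩ (ε / 2) (half_pos hε)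
    obtain ⟨k₂, hk₂, μ₂, hμ₂p, hμ₂i, hμ₂⟩ := hY U₂ h₂ ⟨y, hy⟩ (ε / 2) (half_pos hε)
    haveI := hμ₁p; haveI := hμ₂p
    refine ⟨k₁ * k₂, Nat.mul_pos hk₁ hk₂, μ₁.prod μ₂, inferInstance, ?_, ?_⟩
    · have e₁ : μ₁.map (T^[k₁ * k₂]) = μ₁ := by
        rw [Function.iterate_mul]
        exact map_iterate_inv (hT.measurable.iterate k₁) hμ₁i k₂
      have e₂ : μ₂.map (S^[k₁ * k₂]) = μ₂ := by
        rw [mul_comm, Function.iterate_mul]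
        exact map_iterate_inv (hS.measurable.iterate k₂) hμ₂i k₁
      rw [Prod.map_iterate,
        ← Measure.map_prod_map μ₁ μ₂ (hT.measurable.iterate _) (hS.measurable.iterate _),
        e₁, e₂]
    · calc (μ₁.prod μ₂) Uᶜ ≤ (μ₁.prod μ₂) (U₁ ×ˢ U₂)ᶜ :=
            measure_mono (compl_subset_compl.mpr hsub)
        _ ≤ (μ₁.prod μ₂) (U₁ᶜ ×ˢ univ) + (μ₁.prod μ₂) (univ ×ˢ U₂ᶜ) := by
            rw [compl_prod_eq_union]; exact measure_union_le _ _
        _ = μ₁ U₁ᶜ + μ₂ U₂ᶜ := by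
            simp [Measure.prod_prod, measure_univ]
        _ < ENNReal.ofReal (ε / 2) + ENNReal.ofReal (ε / 2) := ENNReal.add_lt_add hμ₁ hμ₂
        _ = ENNReal.ofReal ε := by
            rw [← ENNReal.ofReal_add (half_pos hε).le (half_pos hε).le, add_halves]
  · rintro π ⟨hπc, hπs, hπT⟩ hX V hV hVne ε hε
    have hsc : Function.Semiconj π T S := fun a => congrFun hπT a
    obtain ⟨v, hv⟩ := hVne
    obtain ⟨u, hu⟩ := hπs v
    obtain ⟨k, hk, μ, hμp, hμi, hμ⟩ := hX (π ⁻¹' V) (hV.preimage hπc) ⟨u, by simp [hu, hv]⟩ ε hε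
    haveI := hμp
    refine ⟨k, hk, μ.map π, Measure.isProbabilityMeasure_map hπc.measurable.aemeasurable, ?_, ?_⟩
    · rw [Measure.map_map (hS.measurable.iterate k) hπc.measurable,
        ← (hsc.iterate_right k).comp_eq,
        ← Measure.map_map hπc.measurable (hT.measurable.iterate k), hμi]
    · rw [Measure.map_apply hπc.measurable hV.measurableSet.compl, preimage_compl]
      exact hμ

end Paper
end
end

section
/- If (X,T) is totally transitive and has almost dense periodic sets, then (X,T) is weakly mixing. -/
open MeasureTheory Topology Set Function TopologicalSpace

noncomputable section

namespace Paper

theorem totally_transitive_almost_dense_periodic_implies_wm {X : Type*}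
    [MetricSpace X] [CompactSpace X]
    (T : X → X) (hT : Continuous T) (hTs : Surjective T)
    (htt : IsTotallyTransitive T) (hadps : AlmostDensePeriodicSets T) :
    IsWeaklyMixing T := by
  intro U V hU hUne hV hVne
  obtain ⟨⟨u1, u2⟩, hu⟩ := hUne
  obtain ⟨⟨v1, v2⟩, hv⟩ := hVne
  obtain ⟨U1, U2, hU1, hU2, hu1, hu2, hUsub⟩ := isOpen_prod_iff.mp hU u1 u2 hu
  obtain ⟨V1, V2, hV1, hV2, hv1, hv2, hVsub⟩ := isOpen_prod_iff.mp hV v1 v2 hv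
  -- find n with U1 ∩ T^[n]⁻¹ V1 nonempty
  obtain ⟨n, hn⟩ := (htt 1 one_pos U1 V1 hU1 ⟨u1, hu1⟩ hV1 ⟨v1, hv1⟩).nonempty
  simp only [Set.mem_setOf_eq, Function.iterate_one] at hn
  set B := U1 ∩ T^[n] ⁻¹' V1 with hBdef
  have hBopen : IsOpen B := hU1.inter (IsOpen.preimage (hT.iterate n) hV1)
  letI mX : MeasurableSpace X := borel X
  haveI : BorelSpace X := ⟨rfl⟩
  obtain ⟨k, hk, μ, hμp, hμinv, hμc⟩ := hadps B hBopen hn (1/2) (by norm_num)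
  haveI := hμp
  have hBm : MeasurableSet B := hBopen.measurableSet
  have hmeasIter : ∀ m : ℕ, Measurable (T^[m]) := fun m => (hT.iterate m).measurable
  have hinv : ∀ j : ℕ, μ (T^[k * j] ⁻¹' B) = μ B := by
    intro j
    induction j with
    | zero => simp
    | succ j ih =>
      have heq : T^[k * (j + 1)] ⁻¹' B = T^[k] ⁻¹' (T^[k * j] ⁻¹' B) := by
        rw [← Set.preimage_comp, ← Function.iterate_add]
        ring_nf
      rw [heq, ← Measure.map_apply (hmeasIter k) ((hmeasIter (k * j)) hBm), hμinv, ih]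
  have hhalf : μ Bᶜ < 1 / 2 := by
    have : ENNReal.ofReal ((1 : ℝ) / 2) = 1 / 2 := by
      rw [ENNReal.ofReal_div_of_pos (by norm_num)]
      norm_num
    rwa [this] at hμc
  have key : ∀ j : ℕ, (B ∩ T^[k * j] ⁻¹' B).Nonempty := by
    intro j
    rw [Set.nonempty_iff_ne_empty]
    intro hemp
    have hsub : T^[k * j] ⁻¹' B ⊆ Bᶜ := fun x hx hxB =>
      Set.eq_empty_iff_forall_notMem.mp hemp x ⟨hxB, hx⟩
    have h1 : μ B ≤ μ Bᶜ := (hinv j) ▸ measure_mono hsub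
    have h2 : μ B + μ Bᶜ = 1 := by
      rw [measure_add_measure_compl hBm, measure_univ]
    have : (1 : ENNReal) < 1 := by
      calc (1 : ENNReal) = μ B + μ Bᶜ := h2.symm
        _ ≤ μ Bᶜ + μ Bᶜ := add_le_add_left h1 _
        _ < 1 / 2 + 1 / 2 := ENNReal.add_lt_add hhalf hhalf
        _ = 1 := ENNReal.add_halves 1
    exact absurd this (lt_irrefl 1)
  -- use total transitivity with power k
  have hWopen : IsOpen (T^[n] ⁻¹' V2) := IsOpen.preimage (hT.iterate n) hV2
  have hWne : (T^[n] ⁻¹' V2).Nonempty := by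
    obtain ⟨x, hx⟩ := (hTs.iterate n) v2
    exact ⟨x, by simp [Set.mem_preimage, hx, hv2]⟩
  have hS := htt k hk U2 (T^[n] ⁻¹' V2) hU2 ⟨u2, hu2⟩ hWopen hWne
  refine Set.infinite_of_injOn_mapsTo (f := fun j => n + k * j) ?_ ?_ hS
  · intro a _ b _ h
    simp only at h
    exact Nat.eq_of_mul_eq_mul_left hk (Nat.add_left_cancel h)
  · rintro j ⟨y, hyU2, hyW⟩
    obtain ⟨x, hxB, hxB'⟩ := key j
    refine ⟨(x, y), hUsub ⟨hxB.1, hyU2⟩, ?_⟩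
    simp only [Set.mem_preimage, Prod.map_iterate, Prod.map_apply]
    apply hVsub
    constructor
    · have hx2 : T^[k * j] x ∈ T^[n] ⁻¹' V1 := (Set.mem_preimage.mp hxB').2
      show T^[n + k * j] x ∈ V1
      rw [Function.iterate_add_apply]
      exact hx2
    · have hy2 : T^[k * j] y ∈ T^[n] ⁻¹' V2 := by
        rw [Function.iterate_mul]
        exact hyW
      show T^[n + k * j] y ∈ V2
      rw [Function.iterate_add_apply]
      exact hy2

end Paper
end
end
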